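/- arXiv:1511.00528 — 8 statements merged into one kernel-verified Lean document; each statement's English description precedes it below -/
import Mathlib

section
/- Let (s_t)_{t>0} be kernels satisfying the size condition with exponents m, α > 0. Let Q ⊂ ℝ^n be a cube, G ⊂ Q, and let ν be a finite positive Borel measure with ν(Q) ≤ A ℓ(Q)^m. If there is C₀ such that ‖1_G V_{ν,Q} f‖_{L²(ν)} ≤ C₀ ‖f‖_{L²(ν)} for every f ∈ L²(ν) with supp f ⊂ G, then ‖1_G V_ν f‖_{L²(ν)} ≤ C ‖f‖_{L²(ν)} for every f ∈ L²(ν) with supp f ⊂ G, where C depends only on C₀, A, m and the kernel size constant. -/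
open MeasureTheory Metric Set
open scoped ENNReal NNReal

noncomputable section

abbrev Rn (n : ℕ) : Type := EuclideanSpace ℝ (Fin n)

structure Cube (n : ℕ) : Type where
  c : Rn n
  l : ℝ
  l_pos : 0 < l

namespace Cube

variable {n : ℕ}

/-- The (half-open) cube as a subset of `ℝⁿ`. -/
def set (Q : Cube n) : Set (Rn n) :=
  {x | ∀ i, Q.c i - Q.l / 2 ≤ x i ∧ x i < Q.c i + Q.l / 2}

/-- The concentric dilated cube `λQ` as a set. -/
def dilatedSet (Q : Cube n) (lam : ℝ) : Set (Rn n) :=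
  {x | ∀ i, Q.c i - lam * Q.l / 2 ≤ x i ∧ x i < Q.c i + lam * Q.l / 2}

/-- The distance `d(P,R)` between two cubes. -/
def dist (P R : Cube n) : ℝ :=
  sInf (Set.image2 (fun x y => Dist.dist x y) P.set R.set)

/-- The long distance `D(P,R) = ℓ(P) + ℓ(R) + d(P,R)`. -/
def longDist (P R : Cube n) : ℝ := P.l + R.l + Cube.dist P R

end Cube

/-- Size condition for the kernels `s_t`. -/
def SizeCond (n : ℕ) (m α Cs : ℝ) (s : ℝ → Rn n → Rn n → ℂ) : Prop :=
  ∀ t : ℝ, 0 < t → ∀ x y : Rn n,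
    ‖s t x y‖ ≤ Cs * t ^ α / (t + Dist.dist x y) ^ (m + α)

/-- Hölder condition in the `y`-variable. -/
def HolderY (n : ℕ) (m α Cs : ℝ) (s : ℝ → Rn n → Rn n → ℂ) : Prop :=
  ∀ t : ℝ, 0 < t → ∀ x y z : Rn n, Dist.dist y z < t / 2 →
    ‖s t x y - s t x z‖ ≤ Cs * Dist.dist y z ^ α / (t + Dist.dist x y) ^ (m + α)

/-- Hölder condition in the `x`-variable. -/
def HolderX (n : ℕ) (m α Cs : ℝ) (s : ℝ → Rn n → Rn n → ℂ) : Prop :=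
  ∀ t : ℝ, 0 < t → ∀ x y z : Rn n, Dist.dist x z < t / 2 →
    ‖s t x y - s t z y‖ ≤ Cs * Dist.dist x z ^ α / (t + Dist.dist x y) ^ (m + α)

/-- `θ_t(g dσ)(x) = ∫ s_t(x,y) g(y) dσ(y)`. -/
def theta {n : ℕ} (s : ℝ → Rn n → Rn n → ℂ) (σ : Measure (Rn n)) (g : Rn n → ℂ)
    (t : ℝ) (x : Rn n) : ℂ :=
  ∫ y, s t x y * g y ∂σ

/-- `∫_I |θ_t(g dσ)(x)|² dt/t`, the square of the vertical square function with
`t` restricted to `I` (the full square function corresponds to `I = (0,∞)`, the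
truncation `V_Q` to `I = (0, ℓ(Q))`). -/
def sqV {n : ℕ} (s : ℝ → Rn n → Rn n → ℂ) (σ : Measure (Rn n)) (g : Rn n → ℂ)
    (I : Set ℝ) (x : Rn n) : ℝ≥0∞ :=
  ∫⁻ t in I, (‖theta s σ g t x‖₊ : ℝ≥0∞) ^ 2 / ENNReal.ofReal t

/-- Suppose the kernels satisfy the size condition, `Q` is a cube,
`G ⊆ Q`, and `ν` is a finite positive Borel measure with `ν(Q) ≤ A ℓ(Q)^m`.  If
`‖1_G V_{ν,Q} f‖_{L²(ν)} ≤ C₀ ‖f‖_{L²(ν)}` for every `f ∈ L²(ν)` supported in `G`,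
then `‖1_G V_ν f‖_{L²(ν)} ≤ C ‖f‖_{L²(ν)}` for every `f ∈ L²(ν)` supported in `G`,
where `C` depends only on `C₀`, `A`, `m` and the kernel size constant. -/
theorem statement1 (m Cs A C₀ : ℝ) (hm : 0 < m) (hCs : 0 < Cs) (hA : 0 < A)
    (hC₀ : 0 < C₀) :
    ∃ C : ℝ, 0 < C ∧
      ∀ (n : ℕ) (α : ℝ), 0 < α →
      ∀ sk : ℝ → Rn n → Rn n → ℂ,
        Measurable (fun p : ℝ × Rn n × Rn n => sk p.1 p.2.1 p.2.2) →
        SizeCond n m α Cs sk →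
      ∀ (Q : Cube n) (G : Set (Rn n)), G ⊆ Q.set →
      ∀ (ν : Measure (Rn n)) [IsFiniteMeasure ν],
        ν Q.set ≤ ENNReal.ofReal (A * Q.l ^ m) →
        (∀ f : Rn n → ℂ, Measurable f → MemLp f 2 ν → Function.support f ⊆ G →
          (∫⁻ x in G, sqV sk ν f (Set.Ioo 0 Q.l) x ∂ν) ^ (1/2 : ℝ)
            ≤ ENNReal.ofReal C₀ * (∫⁻ x, (‖f x‖₊ : ℝ≥0∞) ^ 2 ∂ν) ^ (1/2 : ℝ)) →
        ∀ f : Rn n → ℂ, Measurable f → MemLp f 2 ν → Function.support f ⊆ G →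
          (∫⁻ x in G, sqV sk ν f (Set.Ioi 0) x ∂ν) ^ (1/2 : ℝ)
            ≤ ENNReal.ofReal C * (∫⁻ x, (‖f x‖₊ : ℝ≥0∞) ^ 2 ∂ν) ^ (1/2 : ℝ) := by
  classical
  set c₁ : ℝ := Cs * A / Real.sqrt (2 * m) with hc₁
  have hc₁pos : 0 < c₁ := by positivity
  refine ⟨C₀ + c₁, by positivity, ?_⟩
  intro n α hα sk hskm hsize Q G hGQ ν hfin hνQ hbdd f hf hf2 hsupp
  have hℓ : 0 < Q.l := Q.l_pos
  have hfint : Integrable f ν := hf2.integrable one_le_two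
  set F1 : ℝ := ∫ y, ‖f y‖ ∂ν with hF1def
  have hF1nn : 0 ≤ F1 := integral_nonneg fun _ => norm_nonneg _
  set N2 : ℝ≥0∞ := ∫⁻ x, (‖f x‖₊ : ℝ≥0∞) ^ 2 ∂ν with hN2def
  set K : ℝ≥0∞ := ENNReal.ofReal (Cs ^ 2 * F1 ^ 2 * (Q.l ^ (-(2 * m)) / (2 * m))) with hKdef
  -- pointwise bound on θ for t > 0
  have hθ : ∀ t : ℝ, 0 < t → ∀ x, ‖theta sk ν f t x‖ ≤ Cs * t ^ (-m) * F1 := by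
    intro t ht x
    have hle : ∀ y, ‖sk t x y * f y‖ ≤ Cs * t ^ (-m) * ‖f y‖ := by
      intro y
      rw [norm_mul]
      have h1 : ‖sk t x y‖ ≤ Cs * t ^ α / (t + dist x y) ^ (m + α) := hsize t ht x y
      have hmono : t ^ (m + α) ≤ (t + dist x y) ^ (m + α) :=
        Real.rpow_le_rpow ht.le (by linarith [dist_nonneg (x := x) (y := y)]) (by positivity)
      have h2 : Cs * t ^ α / (t + dist x y) ^ (m + α) ≤ Cs * t ^ α / t ^ (m + α) :=
        div_le_div_of_nonneg_left (by positivity) (Real.rpow_pos_of_pos ht _) hmono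
      have h3 : Cs * t ^ α / t ^ (m + α) = Cs * t ^ (-m) := by
        rw [mul_div_assoc, ← Real.rpow_sub ht, show α - (m + α) = -m by ring]
      have h4 : ‖sk t x y‖ ≤ Cs * t ^ (-m) := by rw [← h3]; exact h1.trans h2
      exact mul_le_mul_of_nonneg_right h4 (norm_nonneg _)
    calc ‖theta sk ν f t x‖ ≤ ∫ y, ‖sk t x y * f y‖ ∂ν := norm_integral_le_integral_norm _
      _ ≤ ∫ y, Cs * t ^ (-m) * ‖f y‖ ∂ν :=
          integral_mono_of_nonneg (ae_of_all _ fun y => norm_nonneg _)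
            ((hfint.norm).const_mul _) (ae_of_all _ hle)
      _ = Cs * t ^ (-m) * F1 := by rw [integral_const_mul]
  -- bound on the tail of the square function
  have htail : ∀ x, sqV sk ν f (Set.Ici Q.l) x ≤ K := by
    intro x
    have step1 : sqV sk ν f (Set.Ici Q.l) x
        ≤ ∫⁻ t in Set.Ici Q.l, ENNReal.ofReal (Cs ^ 2 * F1 ^ 2 * t ^ (-(2 * m) - 1)) := by
      apply lintegral_mono_ae
      filter_upwards [ae_restrict_mem measurableSet_Ici] with t ht
      have ht0 : 0 < t := lt_of_lt_of_le hℓ ht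
      have e1 : ((‖theta sk ν f t x‖₊ : ℝ≥0∞)) ^ 2 / ENNReal.ofReal t
          = ENNReal.ofReal (‖theta sk ν f t x‖ ^ 2 / t) := by
        rw [← ENNReal.ofReal_coe_nnreal, coe_nnnorm, ← ENNReal.ofReal_pow (norm_nonneg _),
          ← ENNReal.ofReal_div_of_pos ht0]
      rw [e1]
      apply ENNReal.ofReal_le_ofReal
      have hsq : ‖theta sk ν f t x‖ ^ 2 ≤ (Cs * t ^ (-m) * F1) ^ 2 :=
        pow_le_pow_left₀ (norm_nonneg _) (hθ t ht0 x) 2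
      have h4 : (t ^ (-m)) ^ 2 = t ^ (-m * 2) := by
        rw [← Real.rpow_natCast (t ^ (-m)) 2, ← Real.rpow_mul ht0.le]
        norm_num
      have h5 : t ^ (-(2 * m) - 1) = t ^ (-m * 2) / t := by
        rw [show -(2 * m) - 1 = -m * 2 - 1 by ring, Real.rpow_sub ht0, Real.rpow_one]
      have heq : (Cs * t ^ (-m) * F1) ^ 2 / t = Cs ^ 2 * F1 ^ 2 * t ^ (-(2 * m) - 1) := by
        rw [h5, mul_pow, mul_pow, h4]; ring
      calc ‖theta sk ν f t x‖ ^ 2 / t ≤ (Cs * t ^ (-m) * F1) ^ 2 / t := by gcongr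
        _ = _ := heq
    have hp : -(2 * m) - 1 < -1 := by linarith
    have hint : IntegrableOn (fun t : ℝ => Cs ^ 2 * F1 ^ 2 * t ^ (-(2 * m) - 1))
        (Set.Ioi Q.l) := (integrableOn_Ioi_rpow_of_lt hp hℓ).const_mul _
    have step2 : (∫⁻ t in Set.Ici Q.l, ENNReal.ofReal (Cs ^ 2 * F1 ^ 2 * t ^ (-(2 * m) - 1)))
        = K := by
      calc ∫⁻ t in Set.Ici Q.l, ENNReal.ofReal (Cs ^ 2 * F1 ^ 2 * t ^ (-(2 * m) - 1))
          = ∫⁻ t in Set.Ioi Q.l, ENNReal.ofReal (Cs ^ 2 * F1 ^ 2 * t ^ (-(2 * m) - 1)) :=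
            (setLIntegral_congr Ioi_ae_eq_Ici).symm
        _ = ENNReal.ofReal (∫ t in Set.Ioi Q.l, Cs ^ 2 * F1 ^ 2 * t ^ (-(2 * m) - 1)) := by
            refine (ofReal_integral_eq_lintegral_ofReal hint ?_).symm
            filter_upwards [ae_restrict_mem measurableSet_Ioi] with t ht
            have ht0 : (0:ℝ) < t := hℓ.trans ht
            positivity
        _ = K := by
            rw [integral_const_mul, integral_Ioi_rpow_of_lt hp hℓ, hKdef]
            congr 1
            rw [show -(2 * m) - 1 + 1 = -(2 * m) by ring, neg_div_neg_eq]
    exact step1.trans_eq step2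
  -- splitting of the square function
  have hdisj : Disjoint (Set.Ioo (0:ℝ) Q.l) (Set.Ici Q.l) :=
    Set.disjoint_left.2 fun t htI htI' => absurd htI.2 (not_lt.2 htI')
  have hsplit : ∀ x, sqV sk ν f (Set.Ioi 0) x
      = sqV sk ν f (Set.Ioo 0 Q.l) x + sqV sk ν f (Set.Ici Q.l) x := by
    intro x
    unfold sqV
    rw [← Set.Ioo_union_Ici_eq_Ioi hℓ, lintegral_union measurableSet_Ici hdisj]
  -- Cauchy–Schwarz
  have hCS : ENNReal.ofReal F1 ≤ N2 ^ (1/2 : ℝ) * (ν G) ^ (1/2 : ℝ) := by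
    set G' := toMeasurable ν G with hG'
    have hmG' : MeasurableSet G' := measurableSet_toMeasurable ν G
    set φ : Rn n → ℝ≥0∞ := G'.indicator 1 with hφ
    have hφmeas : Measurable φ := measurable_one.indicator hmG'
    have h22 : (2:ℝ).HolderConjugate 2 := Real.holderConjugate_iff.2 ⟨one_lt_two, by norm_num⟩
    have hH := ENNReal.lintegral_mul_le_Lp_mul_Lq ν h22 (hf.nnnorm.coe_nnreal_ennreal).aemeasurable
      hφmeas.aemeasurable
    simp only [Pi.mul_apply] at hH
    have hfeq : ∀ y, (‖f y‖₊ : ℝ≥0∞) * φ y = (‖f y‖₊ : ℝ≥0∞) := by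
      intro y
      by_cases hy : y ∈ G'
      · simp [hφ, Set.indicator_of_mem hy]
      · have hfy : f y = 0 := by
          by_contra h
          exact hy (subset_toMeasurable ν G (hsupp h))
        simp [hφ, hfy, Set.indicator_of_notMem hy]
    rw [lintegral_congr hfeq] at hH
    have e2 : (∫⁻ y, (‖f y‖₊ : ℝ≥0∞) ^ (2:ℝ) ∂ν) = N2 := by
      refine lintegral_congr fun y => ?_
      rw [show (2:ℝ) = ((2:ℕ):ℝ) by norm_num, ENNReal.rpow_natCast]
    have e3 : (∫⁻ y, φ y ^ (2:ℝ) ∂ν) = ν G := by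
      have hind : ∀ y, φ y ^ (2:ℝ) = φ y := by
        intro y
        by_cases hy : y ∈ G'
        · simp [hφ, Set.indicator_of_mem hy]
        · simp [hφ, Set.indicator_of_notMem hy,
            ENNReal.zero_rpow_of_pos (by norm_num : (0:ℝ) < 2)]
      rw [lintegral_congr hind, hφ, lintegral_indicator_one hmG', measure_toMeasurable]
    rw [e2, e3] at hH
    rw [hF1def, ofReal_integral_norm_eq_lintegral_enorm hfint]
    exact hH
  -- key bound on K * ν G
  have hνG : ν G ≤ ENNReal.ofReal (A * Q.l ^ m) := (measure_mono hGQ).trans hνQ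
  have hKb : K * ν G ≤ (ENNReal.ofReal c₁) ^ 2 * N2 := by
    have hF1sq : (ENNReal.ofReal F1) ^ 2 ≤ N2 * ν G := by
      calc (ENNReal.ofReal F1) ^ 2 ≤ (N2 ^ (1/2 : ℝ) * (ν G) ^ (1/2 : ℝ)) ^ 2 := by gcongr
        _ = N2 * ν G := by
            rw [mul_pow, ← ENNReal.rpow_natCast (N2 ^ (1/2 : ℝ)) 2,
              ← ENNReal.rpow_natCast ((ν G) ^ (1/2 : ℝ)) 2,
              ← ENNReal.rpow_mul, ← ENNReal.rpow_mul]
            norm_num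
    have hKsplit : K = ENNReal.ofReal (Cs ^ 2 * (Q.l ^ (-(2 * m)) / (2 * m)))
        * (ENNReal.ofReal F1) ^ 2 := by
      rw [hKdef, ← ENNReal.ofReal_pow hF1nn, ← ENNReal.ofReal_mul (by positivity)]
      congr 1; ring
    have hreal : Cs ^ 2 * (Q.l ^ (-(2 * m)) / (2 * m)) * (A * Q.l ^ m * (A * Q.l ^ m))
        = c₁ ^ 2 := by
      have h1 : Q.l ^ m * Q.l ^ m * Q.l ^ (-(2 * m)) = 1 := by
        rw [← Real.rpow_add hℓ, ← Real.rpow_add hℓ, show m + m + -(2 * m) = 0 by ring,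
          Real.rpow_zero]
      have h2 : c₁ ^ 2 = Cs ^ 2 * A ^ 2 / (2 * m) := by
        rw [hc₁, div_pow, mul_pow, Real.sq_sqrt (by positivity : (0:ℝ) ≤ 2 * m)]
      rw [h2]
      calc Cs ^ 2 * (Q.l ^ (-(2 * m)) / (2 * m)) * (A * Q.l ^ m * (A * Q.l ^ m))
          = Cs ^ 2 * A ^ 2 / (2 * m) * (Q.l ^ m * Q.l ^ m * Q.l ^ (-(2 * m))) := by ring
        _ = Cs ^ 2 * A ^ 2 / (2 * m) := by rw [h1, mul_one]
    calc K * ν G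
        ≤ ENNReal.ofReal (Cs ^ 2 * (Q.l ^ (-(2 * m)) / (2 * m))) * (N2 * ν G) * ν G := by
          rw [hKsplit]; gcongr
      _ = ENNReal.ofReal (Cs ^ 2 * (Q.l ^ (-(2 * m)) / (2 * m))) * (ν G * ν G) * N2 := by ring
      _ ≤ ENNReal.ofReal (Cs ^ 2 * (Q.l ^ (-(2 * m)) / (2 * m)))
            * (ENNReal.ofReal (A * Q.l ^ m) * ENNReal.ofReal (A * Q.l ^ m)) * N2 := by gcongr
      _ = ENNReal.ofReal (Cs ^ 2 * (Q.l ^ (-(2 * m)) / (2 * m))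
            * (A * Q.l ^ m * (A * Q.l ^ m))) * N2 := by
          rw [← ENNReal.ofReal_mul (by positivity), ← ENNReal.ofReal_mul (by positivity)]
      _ = (ENNReal.ofReal c₁) ^ 2 * N2 := by rw [hreal, ENNReal.ofReal_pow hc₁pos.le]
  -- the second half of the final estimate
  have hsecond : (K * ν G) ^ (1/2 : ℝ) ≤ ENNReal.ofReal c₁ * N2 ^ (1/2 : ℝ) := by
    have hsq : ((ENNReal.ofReal c₁) ^ 2) ^ (1/2 : ℝ) = ENNReal.ofReal c₁ := by
      rw [← ENNReal.rpow_natCast (ENNReal.ofReal c₁) 2, ← ENNReal.rpow_mul]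
      norm_num
    calc (K * ν G) ^ (1/2 : ℝ)
        ≤ ((ENNReal.ofReal c₁) ^ 2 * N2) ^ (1/2 : ℝ) :=
          ENNReal.rpow_le_rpow hKb (by norm_num)
      _ = ((ENNReal.ofReal c₁) ^ 2) ^ (1/2 : ℝ) * N2 ^ (1/2 : ℝ) :=
          ENNReal.mul_rpow_of_nonneg _ _ (by norm_num)
      _ = ENNReal.ofReal c₁ * N2 ^ (1/2 : ℝ) := by rw [hsq]
  -- conclusion
  calc (∫⁻ x in G, sqV sk ν f (Set.Ioi 0) x ∂ν) ^ (1/2 : ℝ)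
      = (∫⁻ x in G, (sqV sk ν f (Set.Ioo 0 Q.l) x + sqV sk ν f (Set.Ici Q.l) x) ∂ν)
          ^ (1/2 : ℝ) := by rw [lintegral_congr fun x => hsplit x]
    _ ≤ (∫⁻ x in G, (sqV sk ν f (Set.Ioo 0 Q.l) x + K) ∂ν) ^ (1/2 : ℝ) := by
        gcongr with x
        exact htail x
    _ = ((∫⁻ x in G, sqV sk ν f (Set.Ioo 0 Q.l) x ∂ν) + K * ν G) ^ (1/2 : ℝ) := by
        rw [lintegral_add_right _ measurable_const, setLIntegral_const]
    _ ≤ (∫⁻ x in G, sqV sk ν f (Set.Ioo 0 Q.l) x ∂ν) ^ (1/2 : ℝ) + (K * ν G) ^ (1/2 : ℝ) :=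
        ENNReal.rpow_add_le_add_rpow _ _ (by norm_num) (by norm_num)
    _ ≤ ENNReal.ofReal C₀ * N2 ^ (1/2 : ℝ) + ENNReal.ofReal c₁ * N2 ^ (1/2 : ℝ) :=
        add_le_add (hbdd f hf hf2 hsupp) hsecond
    _ = ENNReal.ofReal (C₀ + c₁) * N2 ^ (1/2 : ℝ) := by
        rw [ENNReal.ofReal_add hC₀.le hc₁pos.le, add_mul]

end
end

section
/- Let Q ⊂ ℝ^n be a cube contained in the interior of the top cube of a dyadic lattice D₀, and let μ, σ be finite Borel measures on ℝ^n with supp μ ⊂ Q and supp σ ⊂ Q. Let B₁ ≥ 1, ε₀ ∈ (0,1), δ = 1/(32B₁). Assume: μ(Q) ≤ σ(Q) ≤ B₁ μ(Q), and for every Borel set A ⊂ Q with μ(A) ≤ ε₀ μ(Q) one has σ(A) ≤ σ(Q)/(32B₁). Let F₁ be the family of maximal cubes R ∈ D₀ with σ(R) > (B₁/ε₀) μ(R), let F₂ be the family of maximal cubes R ∈ D₀ with σ(R) < δ μ(R), and set H₁ = ∪_{R ∈ F₁ ∪ F₂} R. Then σ(H₁) ≤ 2δ σ(Q) = σ(Q)/(16B₁).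 -/
open MeasureTheory Metric Set
open scoped ENNReal NNReal

noncomputable section

/-- The dyadic subcube of `Q₀` of generation `k`, position `j`. -/
def dyadicCube {n : ℕ} (Q₀ : Cube n) (k : ℕ) (j : Fin n → ℕ) : Cube n where
  c := WithLp.toLp 2 (fun i => Q₀.c i - Q₀.l / 2 + ((j i : ℝ) + 1 / 2) * (Q₀.l / 2 ^ k))
  l := Q₀.l / 2 ^ k
  l_pos := by have := Q₀.l_pos; positivity

/-- The dyadic lattice generated by a cube `Q₀`: all dyadic subcubes obtained from
`Q₀` by repeated bisection. -/
def dyadicLattice {n : ℕ} (Q₀ : Cube n) : Set (Cube n) :=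
  {R | ∃ (k : ℕ) (j : Fin n → ℕ), (∀ i, j i < 2 ^ k) ∧ R = dyadicCube Q₀ k j}

/-- The maximal cubes of the family `D` satisfying the property `P`: cubes of `D`
satisfying `P` such that no strictly larger cube of `D` containing them satisfies
`P`. -/
def maxCubes {n : ℕ} (D : Set (Cube n)) (P : Cube n → Prop) : Set (Cube n) :=
  {R | R ∈ D ∧ P R ∧ ∀ R' ∈ D, R.set ⊂ R'.set → ¬ P R'}

lemma cube_measurableSet {n : ℕ} (Q : Cube n) : MeasurableSet Q.set := by
  have h : Q.set = ⋂ i, (fun x : Rn n => x i) ⁻¹'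
      Set.Ico (Q.c i - Q.l / 2) (Q.c i + Q.l / 2) := by
    ext x; simp [Cube.set, Set.mem_iInter, Set.mem_Ico]
  rw [h]
  exact MeasurableSet.iInter fun i =>
    ((continuous_apply i).comp (PiLp.continuous_ofLp 2 _)).measurable measurableSet_Ico

lemma dyadicLattice_countable {n : ℕ} (Q₀ : Cube n) : (dyadicLattice Q₀).Countable := by
  have h : dyadicLattice Q₀ ⊆
      Set.range (fun p : ℕ × (Fin n → ℕ) => dyadicCube Q₀ p.1 p.2) := by
    rintro R ⟨k, j, -, rfl⟩; exact ⟨(k, j), rfl⟩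
  exact (Set.countable_range _).mono h

lemma ico_subset_dyadic (a L : ℝ) (hL : 0 < L) {k m : ℕ} (hkm : k ≤ m) (j : ℕ) :
    Set.Ico (a + j * (L / 2 ^ m)) (a + (j + 1) * (L / 2 ^ m)) ⊆
      Set.Ico (a + (j / 2 ^ (m - k) : ℕ) * (L / 2 ^ k))
        (a + ((j / 2 ^ (m - k) : ℕ) + 1) * (L / 2 ^ k)) := by
  set d := m - k with hd
  have hm : m = k + d := by omega
  set t := j / 2 ^ d with ht
  have h1 : (t * 2 ^ d : ℕ) ≤ j := Nat.div_mul_le_self j _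
  have h2 : j < (t + 1) * 2 ^ d := by
    have := Nat.lt_div_mul_add (a := j) (b := 2 ^ d) (by positivity)
    calc j < j / 2 ^ d * 2 ^ d + 2 ^ d := this
      _ = (t + 1) * 2 ^ d := by rw [ht]; ring
  apply Set.Ico_subset_Ico
  · have h1' : (t : ℝ) * 2 ^ d ≤ j := by exact_mod_cast h1
    rw [hm]
    have he : (t:ℝ) * (L / 2 ^ k) = ((t:ℝ) * 2^d) * (L / 2 ^ (k+d)) := by
      rw [pow_add]; field_simp
    rw [he]
    have hpos : (0:ℝ) < L / 2 ^ (k+d) := by positivity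
    nlinarith
  · have h2' : (j : ℝ) + 1 ≤ ((t:ℝ) + 1) * 2 ^ d := by exact_mod_cast h2
    rw [hm]
    have he : ((t:ℝ) + 1) * (L / 2 ^ k) = (((t:ℝ) + 1) * 2^d) * (L / 2 ^ (k+d)) := by
      rw [pow_add]; field_simp
    rw [he]
    have hpos : (0:ℝ) < L / 2 ^ (k+d) := by positivity
    nlinarith

lemma ico_disjoint_dyadic (a L : ℝ) (hL : 0 < L) {k : ℕ} {j₁ j₂ : ℕ} (h : j₁ ≠ j₂) :
    Disjoint (Set.Ico (a + j₁ * (L / 2 ^ k)) (a + (j₁ + 1) * (L / 2 ^ k)))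
      (Set.Ico (a + j₂ * (L / 2 ^ k)) (a + (j₂ + 1) * (L / 2 ^ k))) := by
  have hpos : (0:ℝ) < L / 2 ^ k := by positivity
  rw [Set.disjoint_left]
  rintro x ⟨hx1, hx2⟩ ⟨hy1, hy2⟩
  rcases h.lt_or_gt with hlt | hlt
  · have : (j₁ : ℝ) + 1 ≤ j₂ := by exact_mod_cast hlt
    nlinarith
  · have : (j₂ : ℝ) + 1 ≤ j₁ := by exact_mod_cast hlt
    nlinarith

lemma dyadic_mem {n : ℕ} (Q₀ : Cube n) (k : ℕ) (j : Fin n → ℕ) (x : Rn n) :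
    x ∈ (dyadicCube Q₀ k j).set ↔
      ∀ i, x i ∈ Set.Ico ((Q₀.c i - Q₀.l / 2) + j i * (Q₀.l / 2 ^ k))
        ((Q₀.c i - Q₀.l / 2) + (j i + 1) * (Q₀.l / 2 ^ k)) := by
  unfold Cube.set dyadicCube
  simp only [Set.mem_setOf_eq, Set.mem_Ico]
  constructor <;> intro h i <;> obtain ⟨h1, h2⟩ := h i <;> constructor <;>
    [skip; skip; skip; skip] <;> · nlinarith [h1, h2]

lemma dyadic_nested_or_disjoint' {n : ℕ} (Q₀ : Cube n) {k m : ℕ} (hkm : k ≤ m)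
    (j j' : Fin n → ℕ) :
    (dyadicCube Q₀ m j').set ⊆ (dyadicCube Q₀ k j).set ∨
      Disjoint (dyadicCube Q₀ m j').set (dyadicCube Q₀ k j).set := by
  have hL := Q₀.l_pos
  by_cases hall : ∀ i, j' i / 2 ^ (m - k) = j i
  · left
    intro x hx
    rw [dyadic_mem] at hx ⊢
    intro i
    have := ico_subset_dyadic (Q₀.c i - Q₀.l / 2) Q₀.l hL hkm (j' i) (hx i)
    rwa [hall i] at this
  · right
    push_neg at hall
    obtain ⟨i, hi⟩ := hall
    rw [Set.disjoint_left]
    intro x hx hx'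
    rw [dyadic_mem] at hx hx'
    have h1 := ico_subset_dyadic (Q₀.c i - Q₀.l / 2) Q₀.l hL hkm (j' i) (hx i)
    have h2 := hx' i
    exact Set.disjoint_left.mp
      (ico_disjoint_dyadic (Q₀.c i - Q₀.l / 2) Q₀.l hL hi) h1 h2

lemma dyadic_nested_or_disjoint {n : ℕ} (Q₀ : Cube n) {R R' : Cube n}
    (hR : R ∈ dyadicLattice Q₀) (hR' : R' ∈ dyadicLattice Q₀) :
    R.set ⊆ R'.set ∨ R'.set ⊆ R.set ∨ Disjoint R.set R'.set := by
  obtain ⟨k, j, -, rfl⟩ := hR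
  obtain ⟨m, j', -, rfl⟩ := hR'
  rcases le_total k m with h | h
  · rcases dyadic_nested_or_disjoint' Q₀ h j j' with h' | h'
    · exact Or.inr (Or.inl h')
    · exact Or.inr (Or.inr h'.symm)
  · rcases dyadic_nested_or_disjoint' Q₀ h j' j with h' | h'
    · exact Or.inl h'
    · exact Or.inr (Or.inr h')

lemma maxCubes_image_pairwise {n : ℕ} (Q₀ : Cube n) (P : Cube n → Prop) :
    (Cube.set '' maxCubes (dyadicLattice Q₀) P).Pairwise (Disjoint · ·) := by
  rintro s ⟨R, hR, rfl⟩ t ⟨R', hR', rfl⟩ hne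
  rcases dyadic_nested_or_disjoint Q₀ hR.1 hR'.1 with h | h | h
  · exact absurd hR'.2.1 (hR.2.2 R' hR'.1 (HasSubset.Subset.ssubset_of_ne h hne))
  · exact absurd hR.2.1
      (hR'.2.2 R hR.1 (HasSubset.Subset.ssubset_of_ne h (Ne.symm hne)))
  · exact h

/-- Let `Q` be a cube contained in the interior of the top cube of a
dyadic lattice `D₀`, and let `μ, σ` be finite Borel measures supported on `Q` with
`μ(Q) ≤ σ(Q) ≤ B₁ μ(Q)` and such that `σ(A) ≤ σ(Q)/(32B₁)` whenever `A ⊆ Q` is Borel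
with `μ(A) ≤ ε₀ μ(Q)`.  With `δ = 1/(32B₁)`, let `F₁` (resp. `F₂`) be the maximal cubes
`R ∈ D₀` with `σ(R) > (B₁/ε₀) μ(R)` (resp. `σ(R) < δ μ(R)`), and
`H₁ = ⋃_{R ∈ F₁ ∪ F₂} R`.  Then `σ(H₁) ≤ 2δ σ(Q) = σ(Q)/(16B₁)`. -/
theorem statement7 (n : ℕ) (B₁ ε₀ : ℝ) (hB₁ : 1 ≤ B₁) (hε₀ : ε₀ ∈ Set.Ioo (0 : ℝ) 1)
    (R₀ Q : Cube n) (hQ : Q.set ⊆ interior R₀.set)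
    (μ σ : Measure (Rn n)) [IsFiniteMeasure μ] [IsFiniteMeasure σ]
    (hμsupp : μ Q.setᶜ = 0) (hσsupp : σ Q.setᶜ = 0)
    (h1 : μ Q.set ≤ σ Q.set) (h2 : σ Q.set ≤ ENNReal.ofReal B₁ * μ Q.set)
    (h4 : ∀ A : Set (Rn n), MeasurableSet A → A ⊆ Q.set →
      μ A ≤ ENNReal.ofReal ε₀ * μ Q.set →
      σ A ≤ σ Q.set / ENNReal.ofReal (32 * B₁)) :
    σ (⋃ R ∈ maxCubes (dyadicLattice R₀)
            (fun R => ENNReal.ofReal (B₁ / ε₀) * μ R.set < σ R.set)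
          ∪ maxCubes (dyadicLattice R₀)
            (fun R => σ R.set < ENNReal.ofReal (1 / (32 * B₁)) * μ R.set),
        Cube.set R)
      ≤ ENNReal.ofReal (2 * (1 / (32 * B₁))) * σ Q.set := by
  have hB₁pos : (0:ℝ) < B₁ := lt_of_lt_of_le one_pos hB₁
  obtain ⟨hεpos, hε1⟩ := hε₀
  have hQm := cube_measurableSet Q
  have hσu : σ Set.univ = σ Q.set := by
    rw [← measure_add_measure_compl hQm, hσsupp, add_zero]
  have hμu : μ Set.univ = μ Q.set := by
    rw [← measure_add_measure_compl hQm, hμsupp, add_zero]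
  set P₁ : Cube n → Prop :=
    fun R => ENNReal.ofReal (B₁ / ε₀) * μ R.set < σ R.set with hP₁
  set P₂ : Cube n → Prop :=
    fun R => σ R.set < ENNReal.ofReal (1 / (32 * B₁)) * μ R.set with hP₂
  set F₁ := maxCubes (dyadicLattice R₀) P₁ with hF₁
  set F₂ := maxCubes (dyadicLattice R₀) P₂ with hF₂
  set S₁ := Cube.set '' F₁ with hS₁def
  set S₂ := Cube.set '' F₂ with hS₂def
  have hsub₁ : F₁ ⊆ dyadicLattice R₀ := fun R hR => hR.1
  have hsub₂ : F₂ ⊆ dyadicLattice R₀ := fun R hR => hR.1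
  have hS₁c : S₁.Countable := (((dyadicLattice_countable R₀).mono hsub₁).image _)
  have hS₂c : S₂.Countable := (((dyadicLattice_countable R₀).mono hsub₂).image _)
  have hS₁m : ∀ s ∈ S₁, MeasurableSet s := by
    rintro s ⟨R, -, rfl⟩; exact cube_measurableSet R
  have hS₂m : ∀ s ∈ S₂, MeasurableSet s := by
    rintro s ⟨R, -, rfl⟩; exact cube_measurableSet R
  have hS₁d : S₁.Pairwise (Disjoint · ·) := maxCubes_image_pairwise R₀ P₁
  have hS₂d : S₂.Pairwise (Disjoint · ·) := maxCubes_image_pairwise R₀ P₂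
  -- Bound for the F₁ part
  have hinv : ENNReal.ofReal (ε₀ / B₁) * ENNReal.ofReal (B₁ / ε₀) = 1 := by
    rw [← ENNReal.ofReal_mul (by positivity),
      show ε₀ / B₁ * (B₁ / ε₀) = 1 by field_simp]
    exact ENNReal.ofReal_one
  have hper₁ : ∀ s ∈ S₁, μ s ≤ ENNReal.ofReal (ε₀ / B₁) * σ s := by
    rintro s ⟨R, hR, rfl⟩
    have hP : ENNReal.ofReal (B₁ / ε₀) * μ R.set < σ R.set := hR.2.1
    calc μ R.set = ENNReal.ofReal (ε₀ / B₁) * (ENNReal.ofReal (B₁ / ε₀) * μ R.set) := by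
          rw [← mul_assoc, hinv, one_mul]
      _ ≤ ENNReal.ofReal (ε₀ / B₁) * σ R.set := mul_le_mul_right hP.le _
  have hσS₁ : ∑' s : S₁, σ (s : Set (Rn n)) ≤ σ Q.set := by
    rw [← measure_sUnion hS₁c hS₁d hS₁m, ← hσu]
    exact measure_mono (Set.subset_univ _)
  have hμU₁ : μ (⋃₀ S₁) ≤ ENNReal.ofReal ε₀ * μ Q.set := by
    rw [measure_sUnion hS₁c hS₁d hS₁m]
    calc ∑' s : S₁, μ (s : Set (Rn n))
        ≤ ∑' s : S₁, ENNReal.ofReal (ε₀ / B₁) * σ (s : Set (Rn n)) :=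
          ENNReal.tsum_le_tsum (fun s => hper₁ s s.2)
      _ = ENNReal.ofReal (ε₀ / B₁) * ∑' s : S₁, σ (s : Set (Rn n)) :=
          ENNReal.tsum_mul_left
      _ ≤ ENNReal.ofReal (ε₀ / B₁) * σ Q.set := mul_le_mul_right hσS₁ _
      _ ≤ ENNReal.ofReal (ε₀ / B₁) * (ENNReal.ofReal B₁ * μ Q.set) :=
          mul_le_mul_right h2 _
      _ = ENNReal.ofReal ε₀ * μ Q.set := by
          rw [← mul_assoc, ← ENNReal.ofReal_mul (by positivity),
            show ε₀ / B₁ * B₁ = ε₀ by field_simp]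
  have hU₁σ : σ (⋃₀ S₁) ≤ σ Q.set / ENNReal.ofReal (32 * B₁) := by
    have hA : σ (⋃₀ S₁ ∩ Q.set) ≤ σ Q.set / ENNReal.ofReal (32 * B₁) :=
      h4 _ ((MeasurableSet.sUnion hS₁c hS₁m).inter hQm) Set.inter_subset_right
        (le_trans (measure_mono Set.inter_subset_left) hμU₁)
    have hcover : ⋃₀ S₁ ⊆ (⋃₀ S₁ ∩ Q.set) ∪ Q.setᶜ := by
      intro x hx
      by_cases h : x ∈ Q.set
      · exact Or.inl ⟨hx, h⟩
      · exact Or.inr h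
    calc σ (⋃₀ S₁) ≤ σ ((⋃₀ S₁ ∩ Q.set) ∪ Q.setᶜ) := measure_mono hcover
      _ ≤ σ (⋃₀ S₁ ∩ Q.set) + σ Q.setᶜ := measure_union_le _ _
      _ = σ (⋃₀ S₁ ∩ Q.set) := by rw [hσsupp, add_zero]
      _ ≤ σ Q.set / ENNReal.ofReal (32 * B₁) := hA
  -- Bound for the F₂ part
  have hper₂ : ∀ s ∈ S₂, σ s ≤ ENNReal.ofReal (1 / (32 * B₁)) * μ s := by
    rintro s ⟨R, hR, rfl⟩
    exact (hR.2.1 : σ R.set < _).le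
  have hU₂σ : σ (⋃₀ S₂) ≤ ENNReal.ofReal (1 / (32 * B₁)) * σ Q.set := by
    rw [measure_sUnion hS₂c hS₂d hS₂m]
    calc ∑' s : S₂, σ (s : Set (Rn n))
        ≤ ∑' s : S₂, ENNReal.ofReal (1 / (32 * B₁)) * μ (s : Set (Rn n)) :=
          ENNReal.tsum_le_tsum (fun s => hper₂ s s.2)
      _ = ENNReal.ofReal (1 / (32 * B₁)) * ∑' s : S₂, μ (s : Set (Rn n)) :=
          ENNReal.tsum_mul_left
      _ = ENNReal.ofReal (1 / (32 * B₁)) * μ (⋃₀ S₂) := by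
          rw [measure_sUnion hS₂c hS₂d hS₂m]
      _ ≤ ENNReal.ofReal (1 / (32 * B₁)) * μ Set.univ :=
          mul_le_mul_right (measure_mono (Set.subset_univ _)) _
      _ = ENNReal.ofReal (1 / (32 * B₁)) * μ Q.set := by rw [hμu]
      _ ≤ ENNReal.ofReal (1 / (32 * B₁)) * σ Q.set := mul_le_mul_right h1 _
  -- Combine
  have hdiv : σ Q.set / ENNReal.ofReal (32 * B₁)
      = ENNReal.ofReal (1 / (32 * B₁)) * σ Q.set := by
    rw [one_div, ENNReal.ofReal_inv_of_pos (by positivity), div_eq_mul_inv, mul_comm]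
  have hsplit : (⋃ R ∈ F₁ ∪ F₂, Cube.set R) = (⋃₀ S₁) ∪ (⋃₀ S₂) := by
    rw [Set.biUnion_union, hS₁def, hS₂def, Set.sUnion_image, Set.sUnion_image]
  calc σ (⋃ R ∈ F₁ ∪ F₂, Cube.set R) = σ ((⋃₀ S₁) ∪ (⋃₀ S₂)) := by rw [hsplit]
    _ ≤ σ (⋃₀ S₁) + σ (⋃₀ S₂) := measure_union_le _ _
    _ ≤ σ Q.set / ENNReal.ofReal (32 * B₁)
        + ENNReal.ofReal (1 / (32 * B₁)) * σ Q.set := add_le_add hU₁σ hU₂σ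
    _ = (ENNReal.ofReal (1 / (32 * B₁)) + ENNReal.ofReal (1 / (32 * B₁))) * σ Q.set := by
        rw [hdiv, add_mul]
    _ = ENNReal.ofReal (2 * (1 / (32 * B₁))) * σ Q.set := by
        rw [← ENNReal.ofReal_add (by positivity) (by positivity),
          show 1 / (32 * B₁) + 1 / (32 * B₁) = 2 * (1 / (32 * B₁)) by ring]

end
end

section
/- Let D be a dyadic lattice of a cube R₀ ⊂ ℝ^n, let μ, σ be finite Borel measures on ℝ^n, let 0 < c₁ ≤ c₂, and let E be a subset of the interior of R₀ such that every cube R ∈ D containing a point of E satisfies c₁ μ(R) ≤ σ(R) ≤ c₂ μ(R). Then for every Borel set A ⊂ ℝ^n, c₁ μ(A ∩ E) ≤ σ(A ∩ E) ≤ c₂ μ(A ∩ E). In particular σ restricted to E is absolutely continuous with respect to μ restricted to E, with Radon–Nikodym density φ satisfying c₁ ≤ φ ≤ c₂ μ-a.e. on E. -/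
open MeasureTheory Metric Set
open scoped ENNReal NNReal

noncomputable section

namespace S8
variable {n : ℕ}

lemma mem_dyadicCube_iff (Q₀ : Cube n) (k : ℕ) (j : Fin n → ℕ) (x : Rn n) :
    x ∈ (dyadicCube Q₀ k j).set ↔ ∀ i,
      Q₀.c i - Q₀.l / 2 + (j i : ℝ) * (Q₀.l / 2 ^ k) ≤ x i ∧
        x i < Q₀.c i - Q₀.l / 2 + ((j i : ℝ) + 1) * (Q₀.l / 2 ^ k) := by
  simp only [Cube.set, dyadicCube, Set.mem_setOf_eq, PiLp.toLp_apply]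
  refine forall_congr' fun i => ?_
  constructor <;> rintro ⟨h1, h2⟩ <;> constructor <;> nlinarith [h1, h2]

lemma cube_measurable (Q : Cube n) : MeasurableSet Q.set := by
  have : Q.set = ⋂ i, (fun x : Rn n => x i) ⁻¹' (Set.Ico (Q.c i - Q.l / 2) (Q.c i + Q.l / 2)) := by
    ext x; simp [Cube.set, Set.mem_Ico]
  rw [this]
  exact MeasurableSet.iInter fun i => (by fun_prop : Continuous fun x : Rn n => x i).measurable measurableSet_Ico

lemma exists_gen_cube (Q₀ : Cube n) (k : ℕ) {x : Rn n} (hx : x ∈ Q₀.set) :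
    ∃ j : Fin n → ℕ, (∀ i, j i < 2 ^ k) ∧ x ∈ (dyadicCube Q₀ k j).set := by
  have hl := Q₀.l_pos
  set h : ℝ := Q₀.l / 2 ^ k with hh
  have hhpos : 0 < h := by positivity
  refine ⟨fun i => ⌊(x i - (Q₀.c i - Q₀.l / 2)) / h⌋₊, fun i => ?_, ?_⟩
  · have h1 := (hx i).2
    have : (x i - (Q₀.c i - Q₀.l / 2)) / h < 2 ^ k := by
      rw [div_lt_iff₀ hhpos]
      have : (2:ℝ) ^ k * h = Q₀.l := by rw [hh]; field_simp
      nlinarith [h1]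
    have h2 : ⌊(x i - (Q₀.c i - Q₀.l / 2)) / h⌋₊ < 2 ^ k := by
      apply Nat.floor_lt (div_nonneg (by linarith [(hx i).1]) hhpos.le) |>.mpr
      push_cast; exact this
    exact h2
  · rw [mem_dyadicCube_iff]
    intro i
    have h0 : 0 ≤ (x i - (Q₀.c i - Q₀.l / 2)) / h := by
      exact div_nonneg (by linarith [(hx i).1]) hhpos.le
    constructor
    · have := Nat.floor_le h0
      rw [le_div_iff₀ hhpos] at this
      linarith [this]
    · have := Nat.lt_floor_add_one ((x i - (Q₀.c i - Q₀.l / 2)) / h)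
      rw [div_lt_iff₀ hhpos] at this
      push_cast at this ⊢
      linarith [this]

lemma nested (Q₀ : Cube n) {k k' : ℕ} {j j' : Fin n → ℕ} (hkk' : k ≤ k')
    (hne : ((dyadicCube Q₀ k j).set ∩ (dyadicCube Q₀ k' j').set).Nonempty) :
    (dyadicCube Q₀ k' j').set ⊆ (dyadicCube Q₀ k j).set := by
  obtain ⟨x, hx1, hx2⟩ := hne
  rw [mem_dyadicCube_iff] at hx1 hx2
  have hl := Q₀.l_pos
  set h : ℝ := Q₀.l / 2 ^ k' with hh
  have hhpos : 0 < h := by positivity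
  obtain ⟨m, hm⟩ : ∃ m, k' = k + m := ⟨k' - k, (Nat.add_sub_cancel' hkk').symm⟩
  have hH : Q₀.l / 2 ^ k = 2 ^ m * h := by
    rw [hh, hm]; field_simp; ring
  intro y hy
  rw [mem_dyadicCube_iff] at hy ⊢
  intro i
  obtain ⟨a1, a2⟩ := hx1 i
  obtain ⟨b1, b2⟩ := hx2 i
  obtain ⟨c1, c2⟩ := hy i
  rw [hH] at a1 a2 ⊢
  have key1 : (j i : ℝ) * 2 ^ m ≤ (j' i : ℝ) := by
    have hr : (j i : ℝ) * 2 ^ m < (j' i : ℝ) + 1 := by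
      have := lt_of_le_of_lt a1 b2
      nlinarith [this, hhpos]
    have hn : j i * 2 ^ m < j' i + 1 := by exact_mod_cast hr
    have : j i * 2 ^ m ≤ j' i := by omega
    exact_mod_cast this
  have key2 : (j' i : ℝ) + 1 ≤ ((j i : ℝ) + 1) * 2 ^ m := by
    have hr : ((j' i : ℝ)) < ((j i : ℝ) + 1) * 2 ^ m := by
      have := lt_of_le_of_lt b1 a2
      nlinarith [this, hhpos]
    have hn : j' i < (j i + 1) * 2 ^ m := by exact_mod_cast hr
    have : j' i + 1 ≤ (j i + 1) * 2 ^ m := by omega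
    exact_mod_cast this
  constructor
  · nlinarith [key1, hhpos, c1]
  · nlinarith [key2, hhpos, c2]

lemma same_gen_eq (Q₀ : Cube n) {k : ℕ} {j j' : Fin n → ℕ}
    (hne : ((dyadicCube Q₀ k j).set ∩ (dyadicCube Q₀ k j').set).Nonempty) : j = j' := by
  obtain ⟨x, hx1, hx2⟩ := hne
  rw [mem_dyadicCube_iff] at hx1 hx2
  have hl := Q₀.l_pos
  have hhpos : (0:ℝ) < Q₀.l / 2 ^ k := by positivity
  funext i
  obtain ⟨a1, a2⟩ := hx1 i
  obtain ⟨b1, b2⟩ := hx2 i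
  have h1 : (j i : ℝ) < (j' i : ℝ) + 1 := by nlinarith [lt_of_le_of_lt a1 b2]
  have h2 : (j' i : ℝ) < (j i : ℝ) + 1 := by nlinarith [lt_of_le_of_lt b1 a2]
  have n1 : j i < j' i + 1 := by exact_mod_cast h1
  have n2 : j' i < j i + 1 := by exact_mod_cast h2
  omega

lemma exists_small_cube (Q₀ : Cube n) {x : Rn n} (hx : x ∈ Q₀.set) {ε : ℝ} (hε : 0 < ε) :
    ∃ (k : ℕ) (j : Fin n → ℕ), (∀ i, j i < 2 ^ k) ∧ x ∈ (dyadicCube Q₀ k j).set ∧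
      (dyadicCube Q₀ k j).set ⊆ ball x ε := by
  have hl := Q₀.l_pos
  obtain ⟨k, hk⟩ := pow_unbounded_of_one_lt (Real.sqrt n * Q₀.l / ε) (by norm_num : (1:ℝ) < 2)
  have h2k : (0:ℝ) < 2 ^ k := by positivity
  set h : ℝ := Q₀.l / 2 ^ k with hh
  have hhpos : 0 < h := by positivity
  have hsm : Real.sqrt n * h < ε := by
    rw [div_lt_iff₀ hε] at hk
    rw [hh, ← mul_div_assoc, div_lt_iff₀ h2k]
    nlinarith [hk]
  obtain ⟨j, hj, hxj⟩ := exists_gen_cube Q₀ k hx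
  refine ⟨k, j, hj, hxj, fun y hy => ?_⟩
  rw [mem_ball]
  have hcoord : ∀ i, dist (y i) (x i) ≤ h := by
    intro i
    have h1 := (hy i); have h2 := (hxj i)
    simp only [dyadicCube, Cube.set, Set.mem_setOf_eq, PiLp.toLp_apply] at h1 h2
    rw [Real.dist_eq, abs_le]
    constructor
    · linarith [h1.1, h2.2]
    · linarith [h1.2, h2.1]
  calc dist y x = Real.sqrt (∑ i, dist (y i) (x i) ^ 2) := EuclideanSpace.dist_eq y x
    _ ≤ Real.sqrt (∑ _i : Fin n, h ^ 2) := by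
        apply Real.sqrt_le_sqrt
        apply Finset.sum_le_sum
        intro i _
        exact pow_le_pow_left₀ dist_nonneg (hcoord i) 2
    _ = Real.sqrt n * h := by
        rw [Finset.sum_const, Finset.card_univ, Fintype.card_fin, nsmul_eq_mul,
          Real.sqrt_mul (by positivity), Real.sqrt_sq hhpos.le]
    _ < ε := hsm

lemma key (c₁ c₂ : ℝ) (R₀ : Cube n) (μ σ : Measure (Rn n))
    (E : Set (Rn n)) (hE : E ⊆ interior R₀.set)
    (hcomp : ∀ (k : ℕ) (j : Fin n → ℕ), (∀ i, j i < 2 ^ k) →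
      ((dyadicCube R₀ k j).set ∩ E).Nonempty →
      ENNReal.ofReal c₁ * μ (dyadicCube R₀ k j).set ≤ σ (dyadicCube R₀ k j).set
        ∧ σ (dyadicCube R₀ k j).set ≤ ENNReal.ofReal c₂ * μ (dyadicCube R₀ k j).set)
    (U : Set (Rn n)) (hU : IsOpen U) :
    ENNReal.ofReal c₁ * μ (E ∩ U) ≤ σ U ∧ σ (E ∩ U) ≤ ENNReal.ofReal c₂ * μ U := by
  classical
  set f : ℕ × (Fin n → ℕ) → Set (Rn n) := fun p => (dyadicCube R₀ p.1 p.2).set with hf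
  set I : Set (ℕ × (Fin n → ℕ)) :=
    {p | (∀ i, p.2 i < 2 ^ p.1) ∧ f p ⊆ U ∧ (f p ∩ E).Nonempty} with hI
  set T : Set (ℕ × (Fin n → ℕ)) :=
    {q | q ∈ I ∧ ∃ p ∈ I, f p ⊆ f q ∧ ∀ q' ∈ I, f p ⊆ f q' → q.1 ≤ q'.1} with hT
  set V : Set (Rn n) := ⋃ q ∈ T, f q with hV
  -- every p ∈ I has a minimal-generation ancestor in T containing it
  have hanc : ∀ p ∈ I, ∃ q ∈ T, f p ⊆ f q := by
    intro p hp
    have hex : ∃ k : ℕ, ∃ j, (k, j) ∈ I ∧ f p ⊆ f (k, j) := ⟨p.1, p.2, hp, subset_rfl⟩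
    obtain ⟨j, hjI, hjsub⟩ := Nat.find_spec hex
    refine ⟨(Nat.find hex, j), ⟨hjI, p, hp, hjsub, ?_⟩, hjsub⟩
    intro q' hq' hsub'
    exact Nat.find_le ⟨q'.2, hq', hsub'⟩
  -- T-cubes are pairwise disjoint
  have hdisj : T.PairwiseDisjoint f := by
    intro q₁ hq₁ q₂ hq₂ hne
    rw [Function.onFun, Set.disjoint_iff_inter_eq_empty]
    by_contra hcon
    have hint : (f q₁ ∩ f q₂).Nonempty := Set.nonempty_iff_ne_empty.mpr hcon
    -- wlog-style: prove generations equal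
    obtain ⟨hq₁I, p₁, hp₁, hps₁, hmin₁⟩ := hq₁
    obtain ⟨hq₂I, p₂, hp₂, hps₂, hmin₂⟩ := hq₂
    rcases le_total q₁.1 q₂.1 with hle | hle
    · have hsub := nested R₀ hle hint
      have : q₂.1 ≤ q₁.1 := hmin₂ q₁ hq₁I (hps₂.trans hsub)
      have hkeq : q₁.1 = q₂.1 := le_antisymm hle this
      apply hne
      have hjeq : q₁.2 = q₂.2 := by
        apply same_gen_eq R₀ (k := q₁.1)
        obtain ⟨x, hx1, hx2⟩ := hint
        exact ⟨x, hx1, by rw [hkeq]; exact hx2⟩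
      exact Prod.ext hkeq hjeq
    · have hsub := nested R₀ hle (hint.mono (by rw [Set.inter_comm]))
      have : q₁.1 ≤ q₂.1 := hmin₁ q₂ hq₂I (hps₁.trans hsub)
      have hkeq : q₂.1 = q₁.1 := le_antisymm hle this
      apply hne
      have hjeq : q₂.2 = q₁.2 := by
        apply same_gen_eq R₀ (k := q₂.1)
        obtain ⟨x, hx1, hx2⟩ := hint
        exact ⟨x, hx2, by rw [hkeq]; exact hx1⟩
      exact (Prod.ext hkeq hjeq).symm
  have hmeas : ∀ q ∈ T, MeasurableSet (f q) := fun q _ => cube_measurable _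
  have hμV : μ V = ∑' q : T, μ (f q) := measure_biUnion T.to_countable hdisj hmeas
  have hσV : σ V = ∑' q : T, σ (f q) := measure_biUnion T.to_countable hdisj hmeas
  -- E ∩ U ⊆ V
  have hEU : E ∩ U ⊆ V := by
    rintro x ⟨hxE, hxU⟩
    have hxint : x ∈ interior R₀.set := hE hxE
    have hxR : x ∈ R₀.set := interior_subset hxint
    obtain ⟨ε₁, hε₁, hb₁⟩ := Metric.isOpen_iff.mp hU x hxU
    obtain ⟨k, j, hj, hxj, hball⟩ := exists_small_cube R₀ hxR hε₁
    have hpI : (k, j) ∈ I := ⟨hj, hball.trans hb₁, ⟨x, hxj, hxE⟩⟩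
    obtain ⟨q, hqT, hqsub⟩ := hanc (k, j) hpI
    exact Set.mem_biUnion hqT (hqsub hxj)
  have hVU : V ⊆ U := by
    refine Set.iUnion₂_subset fun q hq => hq.1.2.1
  have hcompq : ∀ q ∈ T,
      ENNReal.ofReal c₁ * μ (f q) ≤ σ (f q) ∧ σ (f q) ≤ ENNReal.ofReal c₂ * μ (f q) :=
    fun q hq => hcomp q.1 q.2 hq.1.1 hq.1.2.2
  constructor
  · calc ENNReal.ofReal c₁ * μ (E ∩ U) ≤ ENNReal.ofReal c₁ * μ V :=
          mul_le_mul_right (measure_mono hEU) _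
      _ = ∑' q : T, ENNReal.ofReal c₁ * μ (f q) := by rw [hμV, ENNReal.tsum_mul_left]
      _ ≤ ∑' q : T, σ (f q) := ENNReal.tsum_le_tsum fun q => (hcompq q q.2).1
      _ = σ V := hσV.symm
      _ ≤ σ U := measure_mono hVU
  · calc σ (E ∩ U) ≤ σ V := measure_mono hEU
      _ = ∑' q : T, σ (f q) := hσV
      _ ≤ ∑' q : T, ENNReal.ofReal c₂ * μ (f q) := ENNReal.tsum_le_tsum fun q => (hcompq q q.2).2
      _ = ENNReal.ofReal c₂ * μ V := by rw [hμV, ENNReal.tsum_mul_left]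
      _ ≤ ENNReal.ofReal c₂ * μ U := mul_le_mul_right (measure_mono hVU) _

end S8

/-- Let `D` be the dyadic lattice of `R₀`, `μ, σ` finite Borel
measures, `0 < c₁ ≤ c₂`, and `E` a (Borel) subset of the interior of `R₀` such that
every cube `R ∈ D` containing a point of `E` satisfies `c₁ μ(R) ≤ σ(R) ≤ c₂ μ(R)`.
Then for every Borel set `A`: `c₁ μ(A ∩ E) ≤ σ(A ∩ E) ≤ c₂ μ(A ∩ E)`.  In particular
`σ⌊E ≪ μ⌊E`, with a Radon–Nikodym density `φ` satisfying `c₁ ≤ φ ≤ c₂` μ-a.e. on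
`E`. -/
theorem statement8 (n : ℕ) (c₁ c₂ : ℝ) (hc₁ : 0 < c₁) (hc : c₁ ≤ c₂)
    (R₀ : Cube n) (μ σ : Measure (Rn n)) [IsFiniteMeasure μ] [IsFiniteMeasure σ]
    (E : Set (Rn n)) (hE_meas : MeasurableSet E) (hE : E ⊆ interior R₀.set)
    (hcomp : ∀ R ∈ dyadicLattice R₀, (Cube.set R ∩ E).Nonempty →
      ENNReal.ofReal c₁ * μ (Cube.set R) ≤ σ (Cube.set R)
        ∧ σ (Cube.set R) ≤ ENNReal.ofReal c₂ * μ (Cube.set R)) :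
    (∀ A : Set (Rn n), MeasurableSet A →
        ENNReal.ofReal c₁ * μ (A ∩ E) ≤ σ (A ∩ E)
          ∧ σ (A ∩ E) ≤ ENNReal.ofReal c₂ * μ (A ∩ E))
    ∧ σ.restrict E ≪ μ.restrict E
    ∧ ∃ φ : Rn n → ℝ≥0∞, Measurable φ
        ∧ (∀ A : Set (Rn n), MeasurableSet A →
            σ.restrict E A = ∫⁻ x in A, φ x ∂(μ.restrict E))
        ∧ (∀ᵐ x ∂(μ.restrict E),
            ENNReal.ofReal c₁ ≤ φ x ∧ φ x ≤ ENNReal.ofReal c₂) := by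
  have hkey := S8.key c₁ c₂ R₀ μ σ E hE
    (fun k j hj hne => hcomp _ ⟨k, j, hj, rfl⟩ hne)
  -- Part 1
  have part1 : ∀ A : Set (Rn n), MeasurableSet A →
      ENNReal.ofReal c₁ * μ (A ∩ E) ≤ σ (A ∩ E)
        ∧ σ (A ∩ E) ≤ ENNReal.ofReal c₂ * μ (A ∩ E) := by
    intro A _
    constructor
    · rw [Set.measure_eq_iInf_isOpen (A ∩ E) σ]
      refine le_iInf fun U => le_iInf fun hAU => le_iInf fun hUo => ?_
      have hsub : A ∩ E ⊆ E ∩ U := fun x hx => ⟨hx.2, hAU hx⟩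
      calc ENNReal.ofReal c₁ * μ (A ∩ E) ≤ ENNReal.ofReal c₁ * μ (E ∩ U) :=
            mul_le_mul_right (measure_mono hsub) _
        _ ≤ σ U := (hkey U hUo).1
    · refine ENNReal.le_of_forall_pos_le_add fun ε hε hfin => ?_
      have hc₂0 : ENNReal.ofReal c₂ ≠ 0 := by
        simp [ENNReal.ofReal_eq_zero]; linarith
      have hδ : (0:ℝ≥0∞) < ε / ENNReal.ofReal c₂ :=
        ENNReal.div_pos (by exact_mod_cast hε.ne') ENNReal.ofReal_ne_top
      obtain ⟨U, hAU, hUo, hμU⟩ := Set.exists_isOpen_lt_add (A ∩ E)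
        (measure_ne_top μ _) hδ.ne'
      have hsub : A ∩ E ⊆ E ∩ U := fun x hx => ⟨hx.2, hAU hx⟩
      calc σ (A ∩ E) ≤ σ (E ∩ U) := measure_mono hsub
        _ ≤ ENNReal.ofReal c₂ * μ U := (hkey U hUo).2
        _ ≤ ENNReal.ofReal c₂ * (μ (A ∩ E) + ε / ENNReal.ofReal c₂) :=
            mul_le_mul_right hμU.le _
        _ = ENNReal.ofReal c₂ * μ (A ∩ E) + ENNReal.ofReal c₂ * (ε / ENNReal.ofReal c₂) := by
            rw [mul_add]
        _ = ENNReal.ofReal c₂ * μ (A ∩ E) + ε := by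
            rw [ENNReal.mul_div_cancel hc₂0 ENNReal.ofReal_ne_top]
  refine ⟨part1, ?_, ?_⟩
  · -- absolute continuity
    refine Measure.AbsolutelyContinuous.mk fun s hs hs0 => ?_
    rw [Measure.restrict_apply hs] at hs0 ⊢
    have := (part1 s hs).2
    rw [hs0, mul_zero] at this
    exact le_antisymm this zero_le
  · -- density
    have hac : σ.restrict E ≪ μ.restrict E := by
      refine Measure.AbsolutelyContinuous.mk fun s hs hs0 => ?_
      rw [Measure.restrict_apply hs] at hs0 ⊢
      have := (part1 s hs).2
      rw [hs0, mul_zero] at this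
      exact le_antisymm this zero_le
    set φ : Rn n → ℝ≥0∞ := (σ.restrict E).rnDeriv (μ.restrict E) with hφ
    have hφm : Measurable φ := Measure.measurable_rnDeriv _ _
    haveI := Measure.haveLebesgueDecomposition_of_sigmaFinite (σ.restrict E) (μ.restrict E)
    have hwd : (μ.restrict E).withDensity φ = σ.restrict E :=
      Measure.withDensity_rnDeriv_eq (σ.restrict E) (μ.restrict E) hac
    have happ : ∀ A : Set (Rn n), MeasurableSet A →
        σ.restrict E A = ∫⁻ x in A, φ x ∂(μ.restrict E) := by
      intro A hA
      rw [← hwd, withDensity_apply _ hA]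
    refine ⟨φ, hφm, happ, ?_⟩
    have hub : φ ≤ᵐ[μ.restrict E] fun _ => ENNReal.ofReal c₂ := by
      refine ae_le_of_forall_setLIntegral_le_of_sigmaFinite hφm fun s hs _ => ?_
      rw [← happ s hs, setLIntegral_const, Measure.restrict_apply hs,
        Measure.restrict_apply hs]
      exact (part1 s hs).2
    have hlb : (fun _ => ENNReal.ofReal c₁) ≤ᵐ[μ.restrict E] φ := by
      refine ae_le_of_forall_setLIntegral_le_of_sigmaFinite measurable_const
        fun s hs _ => ?_
      rw [← happ s hs, setLIntegral_const, Measure.restrict_apply hs,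
        Measure.restrict_apply hs]
      exact (part1 s hs).1
    filter_upwards [hub, hlb] with x h1 h2
    exact ⟨h2, h1⟩

end
end

section
/- Let μ be a measure of order m on ℝ^n with constant C_μ, i.e. μ(B(x,r)) ≤ C_μ r^m for all x, r > 0. For a complex Borel measure ν define the radial maximal function M_{R,m} ν(x) = sup_{r>0} |ν|(B(x,r))/r^m. Then M_{R,m} maps M(ℝ^n) boundedly into L^{1,∞}(μ): for every complex Borel measure ν and every λ > 0, μ({x ∈ ℝ^n : M_{R,m} ν(x) > λ}) ≤ C ‖ν‖/λ, where C depends only on C_μ, m and n. -/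
open MeasureTheory Metric Set
open scoped ENNReal NNReal

noncomputable section

/-- `μ` has order `m` with constant `Cμ`. -/
def OrderM {n : ℕ} (μ : Measure (Rn n)) (m Cμ : ℝ) : Prop :=
  ∀ (x : Rn n) (r : ℝ), 0 < r → μ (Metric.ball x r) ≤ ENNReal.ofReal (Cμ * r ^ m)

/-- The radial maximal function `M_{R,m} ν(x) = sup_{r>0} |ν|(B(x,r))/r^m`, for a
(positive) measure `ν` (representing the variation `|ν|` of a complex measure). -/
def radMax {n : ℕ} (m : ℝ) (ν : Measure (Rn n)) (x : Rn n) : ℝ≥0∞ :=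
  ⨆ (r : ℝ) (_ : 0 < r), ν (Metric.ball x r) / ENNReal.ofReal (r ^ m)

/-- If `μ` has order `m`, then the radial maximal operator `M_{R,m}`
maps `M(ℝⁿ)` boundedly into `L^{1,∞}(μ)`: for every finite (variation of a complex)
measure `ν` and every `λ > 0`,
`μ({x : M_{R,m} ν(x) > λ}) ≤ C ‖ν‖ / λ`, with `C` depending only on `Cμ, m, n`. -/
theorem statement9 (n : ℕ) (m Cμ : ℝ) (hm : 0 < m) (hCμ : 0 < Cμ) :
    ∃ C : ℝ, 0 < C ∧
      ∀ μ : Measure (Rn n), OrderM μ m Cμ →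
      ∀ (ν : Measure (Rn n)) [IsFiniteMeasure ν],
      ∀ lam : ℝ, 0 < lam →
        ENNReal.ofReal lam * μ {x | ENNReal.ofReal lam < radMax m ν x}
          ≤ ENNReal.ofReal C * ν Set.univ := by
  have h8 : (0:ℝ) < 8 ^ m := Real.rpow_pos_of_pos (by norm_num) m
  refine ⟨Cμ * 8 ^ m, by positivity, ?_⟩
  intro μ hμ ν hν lam hlam
  set E := {x : Rn n | ENNReal.ofReal lam < radMax m ν x} with hE
  have key : ∀ x ∈ E, ∃ r : ℝ, 0 < r ∧
      ENNReal.ofReal lam * ENNReal.ofReal (r ^ m) < ν (ball x r) := by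
    intro x hx
    simp only [hE, mem_setOf_eq, radMax, lt_iSup_iff] at hx
    obtain ⟨r, h0, hr⟩ := hx
    refine ⟨r, h0, ?_⟩
    have hrm : ENNReal.ofReal (r ^ m) ≠ 0 := by
      simpa using (Real.rpow_pos_of_pos h0 m)
    rwa [ENNReal.lt_div_iff_mul_lt (Or.inl hrm) (Or.inl ENNReal.ofReal_ne_top)] at hr
  choose! r hr0 hrν using key
  -- bound on the radii
  have hK : ∀ x ∈ E, r x ≤ ((ν univ).toReal / lam) ^ (1/m) := by
    intro x hx
    have h1 : ENNReal.ofReal (lam * r x ^ m) ≤ ν univ := by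
      rw [ENNReal.ofReal_mul hlam.le]
      exact ((hrν x hx).le.trans (measure_mono (subset_univ _)))
    have h2 : lam * r x ^ m ≤ (ν univ).toReal :=
      (ENNReal.ofReal_le_iff_le_toReal (measure_ne_top ν _)).1 h1
    have h3 : r x ^ m ≤ (ν univ).toReal / lam := by
      rw [le_div_iff₀ hlam]; linarith
    have h4 : (r x ^ m) ^ (1/m) ≤ ((ν univ).toReal / lam) ^ (1/m) :=
      Real.rpow_le_rpow (Real.rpow_nonneg (hr0 x hx).le m) h3 (by positivity)
    calc r x = (r x ^ m) ^ (1/m) := by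
          rw [← Real.rpow_mul (hr0 x hx).le, mul_one_div, div_self hm.ne',
            Real.rpow_one]
      _ ≤ _ := h4
  obtain ⟨u, huE, hdisj, hcov⟩ :=
    Vitali.exists_disjoint_subfamily_covering_enlargement_closedBall E
      (id : Rn n → Rn n) r (((ν univ).toReal / lam) ^ (1/m)) hK 4 (by norm_num)
  have hupos : ∀ b ∈ u, 0 < ν (closedBall b (r b)) := by
    intro b hb
    refine lt_of_le_of_lt ?_ ((hrν b (huE hb)).trans_le
      (measure_mono ball_subset_closedBall))
    positivity
  have hu : u.Countable := by
    have hcnt := Measure.countable_meas_pos_of_disjoint_iUnion (μ := ν)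
      (As := fun b : u => closedBall (b : Rn n) (r b))
      (fun b => measurableSet_closedBall)
      (fun i j hij => hdisj i.2 j.2 (fun h => hij (Subtype.ext h)))
    have : {i : u | 0 < ν (closedBall (i : Rn n) (r i))} = univ := by
      ext i; simpa using hupos i i.2
    rw [this, Set.countable_univ_iff] at hcnt
    exact Set.countable_coe_iff.mpr hcnt
  have hEsub : E ⊆ ⋃ b ∈ u, closedBall b (4 * r b) := by
    intro a ha
    obtain ⟨b, hb, hsub⟩ := hcov a ha
    exact mem_biUnion hb (hsub (mem_closedBall_self (hr0 a ha).le))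
  calc ENNReal.ofReal lam * μ E
      ≤ ENNReal.ofReal lam * ∑' b : u, μ (closedBall b (4 * r b)) :=
        mul_le_mul_right
          ((measure_mono hEsub).trans (measure_biUnion_le μ hu _)) _
    _ ≤ ENNReal.ofReal lam * ∑' b : u,
          ENNReal.ofReal (Cμ * 8 ^ m) * ENNReal.ofReal (r b ^ m) := by
        gcongr with b
        have hrb : 0 < r b := hr0 b (huE b.2)
        have : μ (closedBall (b : Rn n) (4 * r b)) ≤
            ENNReal.ofReal (Cμ * (8 * r b) ^ m) :=
          (measure_mono (closedBall_subset_ball (by linarith))).trans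
            (hμ b (8 * r b) (by linarith))
        refine this.trans (le_of_eq ?_)
        rw [Real.mul_rpow (by norm_num) hrb.le, ← ENNReal.ofReal_mul (by positivity)]
        ring_nf
    _ = ENNReal.ofReal (Cμ * 8 ^ m) *
          ∑' b : u, ENNReal.ofReal lam * ENNReal.ofReal (r b ^ m) := by
        rw [← ENNReal.tsum_mul_left, ← ENNReal.tsum_mul_left]
        congr 1; ext b; ring
    _ ≤ ENNReal.ofReal (Cμ * 8 ^ m) * ∑' b : u, ν (closedBall b (r b)) := by
        gcongr with b
        exact ((hrν b (huE b.2)).trans_le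
          (measure_mono ball_subset_closedBall)).le
    _ = ENNReal.ofReal (Cμ * 8 ^ m) * ν (⋃ b ∈ u, closedBall b (r b)) := by
        congr 1
        exact (measure_biUnion hu hdisj (fun b hb => measurableSet_closedBall)).symm
    _ ≤ ENNReal.ofReal (Cμ * 8 ^ m) * ν univ := by
        gcongr; exact subset_univ _

end
end

section
/- Let σ be a finite Borel measure on ℝ^n, m > 0, and p₀ > 0. Define p(x) = sup_{r>0} σ(B(x,r))/r^m, and for each x with p(x) > p₀ set r(x) = sup{r > 0 : σ(B(x,r)) > p₀ r^m} (which is finite since σ is finite), and let H₂ = ∪_{x : p(x) > p₀} B(x, r(x)). Then: (a) H₂ ⊂ {y ∈ ℝ^n : p(y) ≥ p₀/2^m}; (b) every ball B(z,r) with σ(B(z,r)) > p₀ r^m is contained in H₂. -/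
open MeasureTheory Metric Set
open scoped ENNReal NNReal

noncomputable section

/-- `p(x) = sup_{r>0} σ(B(x,r))/r^m`. -/
def pfun {n : ℕ} (σ : Measure (Rn n)) (m : ℝ) (x : Rn n) : ℝ≥0∞ :=
  ⨆ (r : ℝ) (_ : 0 < r), σ (Metric.ball x r) / ENNReal.ofReal (r ^ m)

/-- `r(x) = sup {r > 0 : σ(B(x,r)) > p₀ r^m}`. -/
def rfun {n : ℕ} (σ : Measure (Rn n)) (m p₀ : ℝ) (x : Rn n) : ℝ :=
  sSup {r : ℝ | 0 < r ∧ ENNReal.ofReal (p₀ * r ^ m) < σ (Metric.ball x r)}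

/-- `H₂ = ⋃_{x : p(x) > p₀} B(x, r(x))`. -/
def H2set {n : ℕ} (σ : Measure (Rn n)) (m p₀ : ℝ) : Set (Rn n) :=
  ⋃ x ∈ {x : Rn n | ENNReal.ofReal p₀ < pfun σ m x}, Metric.ball x (rfun σ m p₀ x)

/-- For a finite Borel measure `σ`, `m > 0` and `p₀ > 0`:
(a) `H₂ ⊆ {y : p(y) ≥ p₀/2^m}`;
(b) every ball `B(z,r)` with `σ(B(z,r)) > p₀ r^m` is contained in `H₂`. -/
theorem statement10 (n : ℕ) (m p₀ : ℝ) (hm : 0 < m) (hp₀ : 0 < p₀)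
    (σ : Measure (Rn n)) [IsFiniteMeasure σ] :
    H2set σ m p₀ ⊆ {y : Rn n | ENNReal.ofReal (p₀ / 2 ^ m) ≤ pfun σ m y}
    ∧ ∀ (z : Rn n) (r : ℝ), 0 < r →
        ENNReal.ofReal (p₀ * r ^ m) < σ (Metric.ball z r) →
        Metric.ball z r ⊆ H2set σ m p₀ := by
  have hC : σ Set.univ ≠ ⊤ := measure_ne_top σ _
  set C := (σ Set.univ).toReal with hCdef
  -- boundedness of the defining set of `rfun`
  have hbdd : ∀ x : Rn n, BddAbove
      {r : ℝ | 0 < r ∧ ENNReal.ofReal (p₀ * r ^ m) < σ (Metric.ball x r)} := by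
    intro x
    refine ⟨(C / p₀) ^ (1 / m), ?_⟩
    rintro r ⟨hr, hσr⟩
    have h1 : ENNReal.ofReal (p₀ * r ^ m) ≤ σ Set.univ :=
      le_trans hσr.le (measure_mono (Set.subset_univ _))
    have h2 : p₀ * r ^ m ≤ C := (ENNReal.ofReal_le_iff_le_toReal hC).mp h1
    have h3 : r ^ m ≤ C / p₀ := by
      rw [le_div_iff₀ hp₀]; linarith [mul_comm p₀ (r ^ m)]
    calc r = (r ^ m) ^ (1 / m) := by
              rw [← Real.rpow_mul hr.le, mul_one_div, div_self hm.ne', Real.rpow_one]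
         _ ≤ (C / p₀) ^ (1 / m) :=
              Real.rpow_le_rpow (Real.rpow_nonneg hr.le m) h3 (by positivity)
  -- key estimate
  have key : ∀ (x : Rn n) (r : ℝ), 0 < r →
      ENNReal.ofReal (p₀ * r ^ m) < σ (Metric.ball x r) →
      ∀ y : Rn n, dist y x < r → ENNReal.ofReal (p₀ / 2 ^ m) ≤ pfun σ m y := by
    intro x r hr hσr y hy
    have hR : (0:ℝ) < 2 * r := by linarith
    have hsub : Metric.ball x r ⊆ Metric.ball y (2 * r) := by
      intro w hw
      rw [Metric.mem_ball] at hw ⊢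
      calc dist w y ≤ dist w x + dist x y := dist_triangle _ _ _
        _ < r + r := by rw [dist_comm x y]; exact add_lt_add hw hy
        _ = 2 * r := by ring
    have hRm : (2 * r) ^ m = 2 ^ m * r ^ m := Real.mul_rpow (by norm_num) hr.le
    have heq : p₀ / 2 ^ m * (2 * r) ^ m = p₀ * r ^ m := by
      rw [hRm]
      have h2m : (0:ℝ) < 2 ^ m := Real.rpow_pos_of_pos (by norm_num) m
      field_simp
    have hσR : ENNReal.ofReal (p₀ / 2 ^ m * (2 * r) ^ m) ≤ σ (Metric.ball y (2 * r)) := by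
      rw [heq]; exact le_trans hσr.le (measure_mono hsub)
    have hden0 : ENNReal.ofReal ((2 * r) ^ m) ≠ 0 := by
      simp [ENNReal.ofReal_eq_zero, not_le, Real.rpow_pos_of_pos hR m]
    have hdent : ENNReal.ofReal ((2 * r) ^ m) ≠ ⊤ := ENNReal.ofReal_ne_top
    have hle : ENNReal.ofReal (p₀ / 2 ^ m)
        ≤ σ (Metric.ball y (2 * r)) / ENNReal.ofReal ((2 * r) ^ m) := by
      rw [ENNReal.le_div_iff_mul_le (Or.inl hden0) (Or.inl hdent),
        ← ENNReal.ofReal_mul (by positivity)]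
      exact hσR
    refine le_trans hle ?_
    exact le_iSup₂ (f := fun (s : ℝ) (_ : 0 < s) =>
      σ (Metric.ball y s) / ENNReal.ofReal (s ^ m)) (2 * r) hR
  constructor
  · -- part (a)
    intro y hy
    simp only [H2set, Set.mem_iUnion] at hy
    obtain ⟨x, _, hyx⟩ := hy
    rw [Metric.mem_ball] at hyx
    have hne : {r : ℝ | 0 < r ∧ ENNReal.ofReal (p₀ * r ^ m) < σ (Metric.ball x r)}.Nonempty := by
      by_contra h
      rw [Set.not_nonempty_iff_eq_empty] at h
      have : rfun σ m p₀ x = 0 := by rw [rfun, h, Real.sSup_empty]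
      rw [this] at hyx
      exact absurd hyx (not_lt.mpr dist_nonneg)
    obtain ⟨r, ⟨hr, hσr⟩, hlt⟩ := (lt_csSup_iff (hbdd x) hne).mp hyx
    exact key x r hr hσr y hlt
  · -- part (b)
    intro z r hr hσr
    have hz : ENNReal.ofReal p₀ < pfun σ m z := by
      have h1 : ENNReal.ofReal p₀ < σ (Metric.ball z r) / ENNReal.ofReal (r ^ m) := by
        rw [ENNReal.lt_div_iff_mul_lt
            (Or.inl (by simp [ENNReal.ofReal_eq_zero, not_le, Real.rpow_pos_of_pos hr m]))
            (Or.inl ENNReal.ofReal_ne_top),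
          ← ENNReal.ofReal_mul hp₀.le]
        exact hσr
      exact lt_of_lt_of_le h1 (le_iSup₂ (f := fun (s : ℝ) (_ : 0 < s) =>
        σ (Metric.ball z s) / ENNReal.ofReal (s ^ m)) r hr)
    have hrle : r ≤ rfun σ m p₀ z := le_csSup (hbdd z) ⟨hr, hσr⟩
    refine subset_trans (Metric.ball_subset_ball hrle) ?_
    exact Set.subset_biUnion_of_mem (u := fun x => Metric.ball x (rfun σ m p₀ x)) hz

end
end

section
/- Let m, α > 0, let D and D' be two dyadic lattices of cubes in ℝ^n, and let σ be a finite Borel measure such that σ(λP) ≤ C₀ λ^m ℓ(P)^m for every λ ≥ 1 and every cube P ∈ D ∪ D'. For cubes P, R define D(P,R) = ℓ(P) + ℓ(R) + d(P,R) and A_{PR} = ℓ(P)^{α/2} ℓ(R)^{α/2} D(P,R)^{−(m+α)} σ(P)^{1/2} σ(R)^{1/2}. Then for all nonnegative families (x_P)_{P ∈ D} and (y_R)_{R ∈ D'}: Σ_{P ∈ D} Σ_{R ∈ D'} A_{PR} x_P y_R ≤ C (Σ_P x_P²)^{1/2} (Σ_R y_R²)^{1/2}, where C depends only on n, m, α and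 C₀. In particular, (Σ_{R ∈ D'} [Σ_{P ∈ D} A_{PR} x_P]²)^{1/2} ≤ C (Σ_P x_P²)^{1/2}. -/
open MeasureTheory Metric Set
open scoped ENNReal NNReal

noncomputable section

/-- The matrix `A_{PR} = ℓ(P)^{α/2} ℓ(R)^{α/2} D(P,R)^{-(m+α)} σ(P)^{1/2} σ(R)^{1/2}`. -/
def Amat {n : ℕ} (σ : Measure (Rn n)) (m α : ℝ) (P R : Cube n) : ℝ≥0∞ :=
  ENNReal.ofReal (P.l ^ (α / 2) * R.l ^ (α / 2) / Cube.longDist P R ^ (m + α))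
    * (σ P.set) ^ (1/2 : ℝ) * (σ R.set) ^ (1/2 : ℝ)

namespace Cube
variable {n : ℕ}
lemma center_mem (Q : Cube n) : Q.c ∈ Q.set := by
  intro i
  have := Q.l_pos
  constructor <;> nlinarith

lemma set_nonempty (Q : Cube n) : Q.set.Nonempty := ⟨Q.c, Q.center_mem⟩

lemma distSet_nonempty (P R : Cube n) :
    (Set.image2 (fun x y => Dist.dist x y) P.set R.set).Nonempty :=
  Set.Nonempty.image2 P.set_nonempty R.set_nonempty

lemma distSet_bddBelow (P R : Cube n) :
    BddBelow (Set.image2 (fun x y => Dist.dist x y) P.set R.set) :=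
  ⟨0, by rintro d ⟨x, hx, y, hy, rfl⟩; exact dist_nonneg⟩

lemma dist_nonneg' (P R : Cube n) : 0 ≤ Cube.dist P R :=
  Real.sInf_nonneg (by rintro d ⟨x, hx, y, hy, rfl⟩; exact dist_nonneg)

lemma dist_comm' (P R : Cube n) : Cube.dist P R = Cube.dist R P := by
  unfold Cube.dist
  congr 1
  rw [Set.image2_comm (fun x y => _root_.dist_comm x y)]

lemma longDist_comm (P R : Cube n) : longDist P R = longDist R P := by
  unfold longDist
  rw [dist_comm' P R]; ring

lemma longDist_pos (P R : Cube n) : 0 < longDist P R := by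
  have := P.l_pos; have := R.l_pos; have := dist_nonneg' P R
  unfold longDist; linarith

lemma le_longDist_left (P R : Cube n) : P.l + R.l ≤ longDist P R := by
  have := dist_nonneg' P R; unfold longDist; linarith

lemma exists_pts_of_dist_lt {P R : Cube n} {T : ℝ} (h : Cube.dist P R < T) :
    ∃ p ∈ P.set, ∃ r ∈ R.set, Dist.dist p r < T := by
  have := (csInf_lt_iff (distSet_bddBelow P R) (distSet_nonempty P R)).1 h
  rcases this with ⟨d, ⟨p, hp, r, hr, rfl⟩, hd⟩
  exact ⟨p, hp, r, hr, hd⟩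

lemma abs_coord_le_dist (x y : Rn n) (i : Fin n) : |x i - y i| ≤ Dist.dist x y := by
  rw [EuclideanSpace.dist_eq]
  rw [← Real.sqrt_sq_eq_abs]
  apply Real.sqrt_le_sqrt
  have h : (x i - y i) ^ 2 = Dist.dist (x i) (y i) ^ 2 := by
    rw [Real.dist_eq, sq_abs]
  rw [h]
  exact Finset.single_le_sum (f := fun j => Dist.dist (x j) (y j) ^ 2)
    (fun j _ => sq_nonneg _) (Finset.mem_univ i)

lemma measurableSet_set (Q : Cube n) : MeasurableSet Q.set := by
  have : Q.set = ⋂ i, (fun x : Rn n => x i) ⁻¹' (Set.Ico (Q.c i - Q.l / 2) (Q.c i + Q.l / 2)) := by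
    ext x; simp [Cube.set, Set.mem_Ico]
  rw [this]
  exact MeasurableSet.iInter fun i =>
    (measurableSet_Ico).preimage (EuclideanSpace.proj (𝕜 := ℝ) i).continuous.measurable

/-- Containment of a nearby cube in a dilated cube. -/
lemma subset_dilated {Q R : Cube n} {T : ℝ} (hT : 0 < T) (hd : Cube.dist Q R < T) :
    R.set ⊆ Q.dilatedSet ((Q.l + 2 * R.l + 2 * T) / Q.l) := by
  rcases exists_pts_of_dist_lt hd with ⟨p, hp, r, hr, hpr⟩
  intro x hx i
  have hQ := Q.l_pos
  have hR := R.l_pos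
  have h1 : |x i - r i| < R.l := by
    rcases hx i with ⟨hx1, hx2⟩; rcases hr i with ⟨hr1, hr2⟩
    rw [abs_lt]; constructor <;> linarith
  have h2 : |p i - r i| < T := lt_of_le_of_lt (abs_coord_le_dist p r i) hpr
  have h3 : |p i - Q.c i| ≤ Q.l / 2 := by
    rcases hp i with ⟨hp1, hp2⟩
    rw [abs_le]; constructor <;> linarith
  have key : |x i - Q.c i| < Q.l / 2 + R.l + T := by
    have : x i - Q.c i = (x i - r i) - (p i - r i) + (p i - Q.c i) := by ring
    rw [this]
    calc |(x i - r i) - (p i - r i) + (p i - Q.c i)|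
        ≤ |(x i - r i) - (p i - r i)| + |p i - Q.c i| := abs_add_le _ _
      _ ≤ |x i - r i| + |p i - r i| + |p i - Q.c i| := by
          have h4 : |(x i - r i) - (p i - r i)| ≤ |x i - r i| + |p i - r i| := abs_sub _ _
          linarith
      _ < R.l + T + Q.l / 2 := by
          have := abs_nonneg (p i - Q.c i); linarith
      _ = Q.l / 2 + R.l + T := by ring
  have hlam : ((Q.l + 2 * R.l + 2 * T) / Q.l) * Q.l / 2 = Q.l / 2 + R.l + T := by
    field_simp
  rw [hlam]
  rw [abs_lt] at key
  constructor <;> linarith [key.1, key.2]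

end Cube


section Lat
variable {n : ℕ} (Q₀ : Cube n)

/-- The parametrization of the dyadic lattice. -/
def latMap (p : Σ k : ℕ, (Fin n → Fin (2 ^ k))) : Cube n :=
  dyadicCube Q₀ p.1 (fun i => (p.2 i : ℕ))

lemma latMap_mem (p : Σ k : ℕ, (Fin n → Fin (2 ^ k))) : latMap Q₀ p ∈ dyadicLattice Q₀ :=
  ⟨p.1, fun i => (p.2 i : ℕ), fun i => (p.2 i).2, rfl⟩

lemma dyadicCube_inj {k k' : ℕ} {j j' : Fin n → ℕ}
    (h : dyadicCube Q₀ k j = dyadicCube Q₀ k' j') : k = k' ∧ ∀ i, j i = j' i := by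
  have hL := Q₀.l_pos
  have hl : Q₀.l / 2 ^ k = Q₀.l / 2 ^ k' := congrArg Cube.l h
  have hk : k = k' := by
    have h2 : (2:ℝ) ^ k = 2 ^ k' := by
      rw [div_eq_div_iff (by positivity) (by positivity)] at hl
      have := mul_left_cancel₀ (ne_of_gt hL) hl
      linarith
    have h3 : ((2 ^ k : ℕ) : ℝ) = ((2 ^ k' : ℕ) : ℝ) := by push_cast; exact h2
    exact Nat.pow_right_injective le_rfl (by exact_mod_cast h3)
  subst hk
  refine ⟨rfl, fun i => ?_⟩
  have hc : (dyadicCube Q₀ k j).c = (dyadicCube Q₀ k j').c := congrArg Cube.c h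
  have hci := congrArg (fun v : Rn n => v i) hc
  simp only [dyadicCube, WithLp.ofLp_toLp] at hci
  have hpow : (0:ℝ) < Q₀.l / 2 ^ k := by positivity
  have hj : ((j i : ℕ) : ℝ) = ((j' i : ℕ) : ℝ) := by
    have h1 : (((j i : ℕ) : ℝ) + 1/2) * (Q₀.l / 2 ^ k) = (((j' i : ℕ) : ℝ) + 1/2) * (Q₀.l / 2 ^ k) := by
      linarith
    have := mul_right_cancel₀ (ne_of_gt hpow) h1
    linarith
  exact_mod_cast hj

lemma latMap_injective : Function.Injective (latMap Q₀) := by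
  rintro ⟨k, j⟩ ⟨k', j'⟩ h
  obtain ⟨hk, hj⟩ := dyadicCube_inj Q₀ h
  subst hk
  congr 1
  funext i
  exact Fin.ext (hj i)

lemma latMap_surjOn : dyadicLattice Q₀ ⊆ Set.range (latMap Q₀) := by
  rintro R ⟨k, j, hj, rfl⟩
  exact ⟨⟨k, fun i => ⟨j i, hj i⟩⟩, rfl⟩

/-- Equivalence between the parameter space and the lattice. -/
def latEquiv : (Σ k : ℕ, (Fin n → Fin (2 ^ k))) ≃ ↥(dyadicLattice Q₀) :=
  Equiv.ofBijective (fun p => ⟨latMap Q₀ p, latMap_mem Q₀ p⟩)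
    ⟨fun p q h => latMap_injective Q₀ (congrArg Subtype.val h),
     fun ⟨R, hR⟩ => by rcases latMap_surjOn Q₀ hR with ⟨p, hp⟩; exact ⟨p, Subtype.ext hp⟩⟩

lemma tsum_lattice_eq (f : Cube n → ℝ≥0∞) :
    ∑' R : ↥(dyadicLattice Q₀), f ↑R
      = ∑' k : ℕ, ∑' j : (Fin n → Fin (2 ^ k)), f (latMap Q₀ ⟨k, j⟩) := by
  rw [← Equiv.tsum_eq (latEquiv Q₀) (fun R => f ↑R)]
  rw [← ENNReal.tsum_sigma (fun k (j : Fin n → Fin (2^k)) => f (latMap Q₀ ⟨k, j⟩))]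
  · exact tsum_congr fun p => rfl


/-- Disjointness of distinct cubes of the same generation. -/
lemma gen_disjoint (k : ℕ) (j j' : Fin n → ℕ) (hjj : j ≠ j') :
    Disjoint (dyadicCube Q₀ k j).set (dyadicCube Q₀ k j').set := by
  rw [Set.disjoint_left]
  intro x hx hx'
  have hL := Q₀.l_pos
  have hs : (0:ℝ) < Q₀.l / 2 ^ k := by positivity
  apply hjj
  funext i
  have h1 := hx i
  have h2 := hx' i
  simp only [dyadicCube, WithLp.ofLp_toLp] at h1 h2
  set s := Q₀.l / 2 ^ k with hsdef
  by_contra hne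
  rcases Nat.lt_or_ge (j i) (j' i) with hlt | hge
  · have : ((j i : ℝ) + 1) ≤ (j' i : ℝ) := by exact_mod_cast hlt
    nlinarith [h1.1, h1.2, h2.1, h2.2]
  · have hlt : j' i < j i := lt_of_le_of_ne hge (fun h => hne h.symm)
    have : ((j' i : ℝ) + 1) ≤ (j i : ℝ) := by exact_mod_cast hlt
    nlinarith [h1.1, h1.2, h2.1, h2.2]

end Lat


/-- Cauchy–Schwarz for `tsum` in `ℝ≥0∞`. -/
lemma tsum_mul_le_sqrt_mul_sqrt {ι : Type*} (f g : ι → ℝ≥0∞) :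
    ∑' i, f i * g i ≤ (∑' i, f i ^ 2) ^ (1/2 : ℝ) * (∑' i, g i ^ 2) ^ (1/2 : ℝ) := by
  letI : MeasurableSpace ι := ⊤
  haveI : MeasurableSingletonClass ι := ⟨fun _ => trivial⟩
  have hconj : Real.HolderConjugate 2 2 := Real.HolderConjugate.two_two
  have hf : AEMeasurable f (Measure.count : Measure ι) := (measurable_from_top (f := f)).aemeasurable
  have hg : AEMeasurable g (Measure.count : Measure ι) := (measurable_from_top (f := g)).aemeasurable
  have h := ENNReal.lintegral_mul_le_Lp_mul_Lq (Measure.count : Measure ι) hconj hf hg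
  simp only [Pi.mul_apply] at h
  rw [lintegral_count] at h
  rw [lintegral_count, lintegral_count] at h
  have e : ∀ u : ι → ℝ≥0∞, ∑' i, u i ^ (2:ℕ) = ∑' i, u i ^ (2:ℝ) :=
    fun u => tsum_congr fun i => by rw [← ENNReal.rpow_natCast (u i) 2]; norm_num
  rw [e f, e g]
  exact h

set_option maxHeartbeats 800000 in
/-- Geometric sum with peak: `∑ min (A ρ^k) (A ρ^k)⁻¹ ≤ 2/(1-ρ)`. -/
lemma tsum_min_geom {ρ A : ℝ} (hρ0 : 0 < ρ) (hρ1 : ρ < 1) (hA : 0 < A) :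
    ∑' k : ℕ, ENNReal.ofReal (min (A * ρ ^ k) (A * ρ ^ k)⁻¹)
      ≤ ENNReal.ofReal (2 / (1 - ρ)) := by
  classical
  obtain ⟨N, hN, hNmin⟩ : ∃ N : ℕ, A * ρ ^ N ≤ 1 ∧ ∀ k < N, ¬ (A * ρ ^ k ≤ 1) := by
    have hex : ∃ k : ℕ, A * ρ ^ k ≤ 1 := by
      obtain ⟨k, hk⟩ := exists_pow_lt_of_lt_one (x := A⁻¹) (by positivity) hρ1
      refine ⟨k, ?_⟩
      have h2 := mul_lt_mul_of_pos_left hk hA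
      rw [mul_inv_cancel₀ hA.ne'] at h2
      exact h2.le
    exact ⟨Nat.find hex, Nat.find_spec hex, fun k hk => Nat.find_min hex hk⟩
  set f : ℕ → ℝ≥0∞ := fun k => ENNReal.ofReal (min (A * ρ ^ k) (A * ρ ^ k)⁻¹) with hf
  set g1 : ℕ → ℝ≥0∞ := fun k => if k < N then f k else 0 with hg1
  set g2 : ℕ → ℝ≥0∞ := fun k => if N ≤ k then f k else 0 with hg2
  have hsplit : ∑' k, f k ≤ ∑' k, g1 k + ∑' k, g2 k := by
    rw [← ENNReal.tsum_add]
    apply ENNReal.tsum_le_tsum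
    intro k
    rcases lt_or_ge k N with h | h
    · simp [hg1, hg2, h, not_le.2 h]
    · simp [hg1, hg2, h, not_lt.2 h]
  have hg1sum : ∑' k, g1 k = ∑ k ∈ Finset.range N, f k := by
    rw [tsum_eq_sum (s := Finset.range N)
      (fun b hb => by simp [hg1, Finset.mem_range.not.1 hb])]
    exact Finset.sum_congr rfl fun k hk => by simp [hg1, Finset.mem_range.1 hk]
  have hg2sum : ∑' k, g2 k = ∑' k, f (k + N) := by
    rw [← Function.Injective.tsum_eq (f := g2) (add_left_injective N) ?_]
    · exact tsum_congr fun k => by simp [hg2]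
    · intro k hk
      rcases le_or_gt N k with h | h
      · exact ⟨k - N, by simp; omega⟩
      · exfalso; apply hk; simp [hg2, not_le.2 h]
  have hρE : ENNReal.ofReal ρ < 1 := by
    rw [← ENNReal.ofReal_one]; exact ENNReal.ofReal_lt_ofReal_iff_of_nonneg hρ0.le |>.2 hρ1
  have hgeom : ∑' i : ℕ, (ENNReal.ofReal ρ) ^ i = (1 - ENNReal.ofReal ρ)⁻¹ :=
    ENNReal.tsum_geometric _
  have hbound : (1 - ENNReal.ofReal ρ)⁻¹ = ENNReal.ofReal (1 - ρ)⁻¹ := by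
    rw [← ENNReal.ofReal_one, ← ENNReal.ofReal_sub _ hρ0.le,
      ENNReal.ofReal_inv_of_pos (by linarith)]
  -- tail part
  have htail : ∑' k, f (k + N) ≤ ENNReal.ofReal (1 - ρ)⁻¹ := by
    rw [← hbound, ← hgeom]
    apply ENNReal.tsum_le_tsum
    intro i
    have h1 : A * ρ ^ (i + N) ≤ ρ ^ i := by
      have : A * ρ ^ (i + N) = (A * ρ ^ N) * ρ ^ i := by rw [pow_add]; ring
      rw [this]
      nlinarith [pow_pos hρ0 i, pow_nonneg hρ0.le i]
    calc f (i + N) ≤ ENNReal.ofReal (ρ ^ i) :=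
          ENNReal.ofReal_le_ofReal ((min_le_left _ _).trans h1)
      _ = (ENNReal.ofReal ρ) ^ i := by rw [ENNReal.ofReal_pow hρ0.le]
  -- head part
  have hhead : ∑ k ∈ Finset.range N, f k ≤ ENNReal.ofReal (1 - ρ)⁻¹ := by
    have hterm : ∀ k < N, f k ≤ (ENNReal.ofReal ρ) ^ (N - 1 - k) := by
      intro k hk
      have hk1 : ¬ (A * ρ ^ k ≤ 1) := hNmin k hk
      push_neg at hk1
      have hpos : 0 < A * ρ ^ k := by positivity
      have h2 : (A * ρ ^ k)⁻¹ ≤ ρ ^ (N - 1 - k) := by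
        have hkN : k + (N - 1 - k) = N - 1 := by omega
        have hN1 : ¬ (A * ρ ^ (N-1) ≤ 1) := by
          rcases Nat.eq_zero_or_pos N with h0 | h0
          · omega
          · exact hNmin (N-1) (by omega)
        push_neg at hN1
        have : 1 < (A * ρ ^ k) * ρ ^ (N - 1 - k) := by
          have hp : ρ ^ k * ρ ^ (N-1-k) = ρ ^ (N-1) := by rw [← pow_add, hkN]
          calc (1:ℝ) < A * ρ ^ (N-1) := hN1
            _ = (A * ρ ^ k) * ρ ^ (N - 1 - k) := by rw [← hp]; ring
        rw [inv_le_iff_one_le_mul₀ hpos]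
        linarith [mul_comm (A * ρ ^ k) (ρ ^ (N - 1 - k))]
      calc f k ≤ ENNReal.ofReal (ρ ^ (N-1-k)) :=
            ENNReal.ofReal_le_ofReal ((min_le_right _ _).trans h2)
        _ = (ENNReal.ofReal ρ) ^ (N-1-k) := by rw [ENNReal.ofReal_pow hρ0.le]
    calc ∑ k ∈ Finset.range N, f k
        ≤ ∑ k ∈ Finset.range N, (ENNReal.ofReal ρ) ^ (N - 1 - k) :=
          Finset.sum_le_sum fun k hk => hterm k (Finset.mem_range.1 hk)
      _ = ∑ k ∈ Finset.range N, (ENNReal.ofReal ρ) ^ k := Finset.sum_range_reflect _ N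
      _ ≤ ∑' k : ℕ, (ENNReal.ofReal ρ) ^ k := ENNReal.sum_le_tsum _
      _ = ENNReal.ofReal (1 - ρ)⁻¹ := by rw [hgeom, hbound]
  calc ∑' k, f k ≤ ∑' k, g1 k + ∑' k, g2 k := hsplit
    _ = ∑ k ∈ Finset.range N, f k + ∑' k, f (k + N) := by rw [hg1sum, hg2sum]
    _ ≤ ENNReal.ofReal (1 - ρ)⁻¹ + ENNReal.ofReal (1 - ρ)⁻¹ := add_le_add hhead htail
    _ = ENNReal.ofReal (2 / (1 - ρ)) := by
        have h1ρ : (0:ℝ) < 1 - ρ := by linarith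
        rw [← ENNReal.ofReal_add (le_of_lt (inv_pos.2 h1ρ)) (le_of_lt (inv_pos.2 h1ρ))]
        congr 1
        field_simp
        ring

/-- Duality: an `ℓ²` bound for all test sequences gives an `ℓ²` bound for the image. -/
lemma dual_bound {ι₁ ι₂ : Type*} (A : ι₁ → ι₂ → ℝ≥0∞) (x : ι₁ → ℝ≥0∞) (c : ℝ≥0∞)
    (h : ∀ z : ι₂ → ℝ≥0∞,
      ∑' i, ∑' r, A i r * x i * z r ≤ c * (∑' r, z r ^ 2) ^ (1/2 : ℝ)) :
    (∑' r, (∑' i, A i r * x i) ^ 2) ^ (1/2 : ℝ) ≤ c := by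
  classical
  rcases eq_or_ne c ⊤ with hc | hc
  · simp [hc]
  set y : ι₂ → ℝ≥0∞ := fun r => ∑' i, A i r * x i with hy
  have hyr : ∀ r, y r ≤ c := by
    intro r
    have := h (fun r' => if r' = r then 1 else 0)
    have hz2 : ∑' r' : ι₂, (if r' = r then (1:ℝ≥0∞) else 0) ^ 2 = 1 := by
      rw [tsum_eq_single r (fun b hb => by simp [hb])]
      simp
    rw [hz2] at this
    simp only [ENNReal.one_rpow, mul_one] at this
    refine le_trans ?_ this
    rw [hy]
    apply ENNReal.tsum_le_tsum
    intro i
    rw [tsum_eq_single r (fun b hb => by simp [hb])]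
    simp
  have hBF : ∀ F : Finset ι₂, ∑ r ∈ F, y r ^ 2 ≤ c ^ 2 := by
    intro F
    set B := ∑ r ∈ F, y r ^ 2 with hB
    have hBfin : B ≠ ⊤ := by
      rw [hB]
      refine (lt_of_le_of_lt (Finset.sum_le_sum (fun r _ => pow_le_pow_left' (hyr r) 2))
        ?_).ne
      simp only [Finset.sum_const, nsmul_eq_mul]
      exact ENNReal.mul_lt_top (by simp) (ENNReal.pow_lt_top hc.lt_top)
    have hmain : B ≤ c * B ^ (1/2 : ℝ) := by
      have := h (fun r => if r ∈ F then y r else 0)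
      have hz2 : ∑' r : ι₂, (if r ∈ F then y r else 0) ^ 2 = B := by
        rw [tsum_eq_sum (s := F) (fun b hb => by simp [hb])]
        exact Finset.sum_congr rfl fun r hr => by simp [hr]
      rw [hz2] at this
      refine le_trans ?_ this
      have hswap : ∑' i, ∑' r, A i r * x i * (if r ∈ F then y r else 0)
          = ∑' r, (if r ∈ F then y r else 0) * y r := by
        rw [ENNReal.tsum_comm]
        exact tsum_congr fun r => by rw [ENNReal.tsum_mul_right, mul_comm]
      rw [hswap]
      rw [tsum_eq_sum (s := F) (fun b hb => by simp [hb])]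
      rw [hB]
      apply Finset.sum_le_sum
      intro r hr
      simp [hr, sq]
    -- from B ≤ c * B^(1/2) and B finite conclude B ≤ c^2
    rcases eq_or_ne B 0 with h0 | h0
    · simp [h0]
    have hhalf : B ^ (1/2 : ℝ) ≠ 0 :=
      (ENNReal.rpow_pos (pos_iff_ne_zero.2 h0) hBfin).ne'
    have hhalffin : B ^ (1/2 : ℝ) ≠ ⊤ :=
      ENNReal.rpow_ne_top_of_nonneg (by norm_num) hBfin
    have hBhalf : B = B ^ (1/2 : ℝ) * B ^ (1/2 : ℝ) := by
      rw [← ENNReal.rpow_add _ _ h0 hBfin]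
      norm_num
    have hmm : B ^ (1/2 : ℝ) * B ^ (1/2 : ℝ) ≤ c * B ^ (1/2 : ℝ) := by
      rw [← hBhalf]; exact hmain
    have hle : B ^ (1/2 : ℝ) ≤ c :=
      (ENNReal.mul_le_mul_iff_left hhalf hhalffin).1 hmm
    calc B = (B ^ (1/2:ℝ)) ^ 2 := by
          rw [← ENNReal.rpow_natCast (B ^ (1/2:ℝ)) 2, ← ENNReal.rpow_mul]; norm_num
      _ ≤ c ^ 2 := pow_le_pow_left' hle 2
  have htot : ∑' r, y r ^ 2 ≤ c ^ 2 := by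
    rw [ENNReal.tsum_eq_iSup_sum]
    exact iSup_le hBF
  calc (∑' r, y r ^ 2) ^ (1/2:ℝ) ≤ (c ^ 2) ^ (1/2:ℝ) :=
        ENNReal.rpow_le_rpow htot (by norm_num)
    _ = c := by rw [← ENNReal.rpow_natCast c 2, ← ENNReal.rpow_mul]; norm_num

section GenBound
variable {n : ℕ}

lemma gen_bound (m α C₀ : ℝ) (hm : 0 < m) (hα : 0 < α) (hC₀ : 0 < C₀)
    (Q : Cube n) (σ : Measure (Rn n))
    (hσ : ∀ lam : ℝ, 1 ≤ lam → σ (Q.dilatedSet lam) ≤ ENNReal.ofReal (C₀ * lam ^ m * Q.l ^ m))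
    {ι : Type*} (𝒞 : Finset ι) (R : ι → Cube n) (s : ℝ) (hs : 0 < s)
    (hsl : ∀ i ∈ 𝒞, (R i).l = s)
    (hdisj : ∀ i ∈ 𝒞, ∀ i' ∈ 𝒞, i ≠ i' → Disjoint (R i).set (R i').set) :
    ∑ i ∈ 𝒞, ENNReal.ofReal (s ^ (α/2) / Cube.longDist Q (R i) ^ (m+α)) * σ (R i).set
      ≤ ENNReal.ofReal ((C₀ * 6 ^ m / (1 - 2 ^ (-α))) * (s ^ (α/2) * (Q.l + s) ^ (-α))) := by
  classical
  have hℓ : 0 < Q.l := Q.l_pos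
  set E : ℝ := Q.l + s with hE
  have hEpos : 0 < E := by positivity
  set jdx : ι → ℕ := fun i => Nat.log 2 ⌊Cube.longDist Q (R i) / E⌋₊ with hjdx
  set r : ℝ := 2 ^ (-α) with hr
  have hr0 : 0 < r := Real.rpow_pos_of_pos two_pos _
  have hr1 : r < 1 := Real.rpow_lt_one_of_one_lt_of_neg one_lt_two (by linarith)
  set bigC : ℝ := C₀ * 6 ^ m * (s ^ (α/2) * E ^ (-α)) with hbigC
  have hbigC0 : 0 < bigC := by
    have h6 : (0:ℝ) < 6 ^ m := Real.rpow_pos_of_pos (by norm_num) _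
    have h1 : (0:ℝ) < s ^ (α/2) := Real.rpow_pos_of_pos hs _
    have h2 : (0:ℝ) < E ^ (-α) := Real.rpow_pos_of_pos hEpos _
    positivity
  -- basic facts for cubes in the family
  have hD : ∀ i ∈ 𝒞, Cube.longDist Q (R i) = E + Cube.dist Q (R i) := by
    intro i hi
    rw [Cube.longDist, hsl i hi, hE]
  have hDge : ∀ i ∈ 𝒞, E ≤ Cube.longDist Q (R i) := by
    intro i hi
    rw [hD i hi]
    linarith [Cube.dist_nonneg' Q (R i)]
  have hDpos : ∀ i ∈ 𝒞, 0 < Cube.longDist Q (R i) := fun i hi =>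
    lt_of_lt_of_le hEpos (hDge i hi)
  have hfl1 : ∀ i ∈ 𝒞, 1 ≤ ⌊Cube.longDist Q (R i) / E⌋₊ := by
    intro i hi
    have hDnn : 0 ≤ Cube.longDist Q (R i) := (hDpos i hi).le
    rw [Nat.le_floor_iff (div_nonneg hDnn hEpos.le)]
    push_cast
    rw [le_div_iff₀ hEpos, one_mul]
    exact hDge i hi
  have hlow : ∀ i ∈ 𝒞, (2:ℝ) ^ (jdx i) * E ≤ Cube.longDist Q (R i) := by
    intro i hi
    have h1 : (2:ℕ) ^ (jdx i) ≤ ⌊Cube.longDist Q (R i) / E⌋₊ :=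
      Nat.pow_log_le_self 2 (by have := hfl1 i hi; omega)
    have h2 : ((2:ℕ) ^ (jdx i) : ℝ) ≤ Cube.longDist Q (R i) / E :=
      le_trans (by exact_mod_cast h1) (Nat.floor_le (div_nonneg (hDpos i hi).le hEpos.le))
    rw [← le_div_iff₀ hEpos]
    exact_mod_cast h2
  have hup : ∀ i ∈ 𝒞, Cube.longDist Q (R i) < 2 ^ (jdx i + 1) * E := by
    intro i hi
    have h1 : ⌊Cube.longDist Q (R i) / E⌋₊ < 2 ^ (jdx i + 1) :=
      Nat.lt_pow_succ_log_self one_lt_two _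
    have h2 : Cube.longDist Q (R i) / E < ((2:ℕ) ^ (jdx i + 1) : ℝ) := by
      calc Cube.longDist Q (R i) / E < ⌊Cube.longDist Q (R i) / E⌋₊ + 1 :=
            Nat.lt_floor_add_one _
        _ ≤ ((2:ℕ) ^ (jdx i + 1) : ℝ) := by exact_mod_cast Nat.succ_le_of_lt h1
    rw [← div_lt_iff₀ hEpos]
    exact_mod_cast h2
  -- containment of fiber cubes in dilated cube
  have hsub : ∀ i ∈ 𝒞, (R i).set ⊆
      Q.dilatedSet ((Q.l + 2 * s + 2 * (2 ^ (jdx i + 1) * E)) / Q.l) := by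
    intro i hi
    have hT : (0:ℝ) < 2 ^ (jdx i + 1) * E := by positivity
    have hd : Cube.dist Q (R i) < 2 ^ (jdx i + 1) * E := by
      have := hup i hi
      rw [hD i hi] at this
      linarith
    have := Cube.subset_dilated hT hd
    rwa [hsl i hi] at this
  -- measure bound for each fiber
  have hfiber : ∀ j : ℕ,
      ∑ i ∈ 𝒞.filter (fun i => jdx i = j),
          ENNReal.ofReal (s ^ (α/2) / Cube.longDist Q (R i) ^ (m+α)) * σ (R i).set
        ≤ ENNReal.ofReal (bigC * r ^ j) := by
    intro j
    set T : ℝ := 2 ^ (j + 1) * E with hT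
    have hTpos : 0 < T := by positivity
    set lam : ℝ := (Q.l + 2 * s + 2 * T) / Q.l with hlam
    have hlam1 : 1 ≤ lam := by
      rw [hlam, le_div_iff₀ hℓ, one_mul]
      linarith
    set G : ℝ := (2:ℝ) ^ j * E with hG
    have hGpos : 0 < G := by positivity
    have step1 : ∀ i ∈ 𝒞.filter (fun i => jdx i = j),
        ENNReal.ofReal (s ^ (α/2) / Cube.longDist Q (R i) ^ (m+α)) * σ (R i).set
          ≤ ENNReal.ofReal (s ^ (α/2) / G ^ (m+α)) * σ (R i).set := by
      intro i hi
      rw [Finset.mem_filter] at hi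
      obtain ⟨hi𝒞, hij⟩ := hi
      apply mul_le_mul_left
      apply ENNReal.ofReal_le_ofReal
      apply div_le_div_of_nonneg_left (by positivity) (Real.rpow_pos_of_pos hGpos _)
      apply Real.rpow_le_rpow hGpos.le _ (by linarith)
      rw [hG, ← hij]
      exact hlow i hi𝒞
    have step2 : ∑ i ∈ 𝒞.filter (fun i => jdx i = j), σ (R i).set
        ≤ σ (Q.dilatedSet lam) := by
      rw [← measure_biUnion_finset]
      · apply measure_mono
        apply Set.iUnion₂_subset
        intro i hi
        rw [Finset.mem_filter] at hi
        have := hsub i hi.1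
        rw [hi.2] at this
        exact this
      · intro i hi i' hi' hne
        rw [Finset.mem_coe, Finset.mem_filter] at hi hi'
        exact hdisj i hi.1 i' hi'.1 hne
      · intro i _
        exact Cube.measurableSet_set (R i)
    have step3 : σ (Q.dilatedSet lam) ≤ ENNReal.ofReal (C₀ * (6 * G) ^ m) := by
      refine le_trans (hσ lam hlam1) (ENNReal.ofReal_le_ofReal ?_)
      have hlamℓ : lam * Q.l = Q.l + 2 * s + 2 * T := by
        rw [hlam]; field_simp
      have h1 : lam ^ m * Q.l ^ m = (lam * Q.l) ^ m :=
        (Real.mul_rpow (by linarith) hℓ.le).symm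
      rw [mul_assoc, h1, hlamℓ]
      apply mul_le_mul_of_nonneg_left _ hC₀.le
      apply Real.rpow_le_rpow (by linarith) _ hm.le
      have h2j : (1:ℝ) ≤ 2 ^ j := one_le_pow₀ one_le_two
      have hTG : T = 2 * G := by rw [hT, hG, pow_succ]; ring
      have hEG : E ≤ G := by rw [hG]; nlinarith
      rw [hTG]
      have : Q.l + 2 * s ≤ 2 * E := by rw [hE]; linarith
      linarith
    have halg : s ^ (α/2) / G ^ (m+α) * (C₀ * (6 * G) ^ m) = bigC * r ^ j := by
      have h6G : (6 * G) ^ m = 6 ^ m * G ^ m := Real.mul_rpow (by norm_num) hGpos.le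
      have hGdiv : G ^ m / G ^ (m + α) = G ^ (-α) := by
        rw [← Real.rpow_sub hGpos]
        congr 1
        ring
      have hGE : G ^ (-α) = r ^ j * E ^ (-α) := by
        rw [hG, Real.mul_rpow (by positivity) hEpos.le]
        congr 1
        rw [hr, ← Real.rpow_natCast (2:ℝ) j, ← Real.rpow_natCast ((2:ℝ) ^ (-α)) j,
          ← Real.rpow_mul (by norm_num), ← Real.rpow_mul (by norm_num)]
        congr 1
        ring
      rw [h6G]
      calc s ^ (α/2) / G ^ (m+α) * (C₀ * (6 ^ m * G ^ m))
          = C₀ * 6 ^ m * (s ^ (α/2) * (G ^ m / G ^ (m+α))) := by ring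
        _ = C₀ * 6 ^ m * (s ^ (α/2) * (r ^ j * E ^ (-α))) := by rw [hGdiv, hGE]
        _ = bigC * r ^ j := by rw [hbigC]; ring
    calc ∑ i ∈ 𝒞.filter (fun i => jdx i = j),
          ENNReal.ofReal (s ^ (α/2) / Cube.longDist Q (R i) ^ (m+α)) * σ (R i).set
        ≤ ∑ i ∈ 𝒞.filter (fun i => jdx i = j),
            ENNReal.ofReal (s ^ (α/2) / G ^ (m+α)) * σ (R i).set :=
          Finset.sum_le_sum step1
      _ = ENNReal.ofReal (s ^ (α/2) / G ^ (m+α)) *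
            ∑ i ∈ 𝒞.filter (fun i => jdx i = j), σ (R i).set := by
          rw [Finset.mul_sum]
      _ ≤ ENNReal.ofReal (s ^ (α/2) / G ^ (m+α)) * ENNReal.ofReal (C₀ * (6 * G) ^ m) :=
          mul_le_mul_right (le_trans step2 step3) _
      _ = ENNReal.ofReal (bigC * r ^ j) := by
          rw [← ENNReal.ofReal_mul (by positivity), halg]
  -- sum over fibers
  calc ∑ i ∈ 𝒞, ENNReal.ofReal (s ^ (α/2) / Cube.longDist Q (R i) ^ (m+α)) * σ (R i).set
      = ∑ j ∈ 𝒞.image jdx, ∑ i ∈ 𝒞.filter (fun i => jdx i = j),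
          ENNReal.ofReal (s ^ (α/2) / Cube.longDist Q (R i) ^ (m+α)) * σ (R i).set :=
        (Finset.sum_fiberwise_of_maps_to (fun i hi => Finset.mem_image_of_mem jdx hi) _).symm
    _ ≤ ∑ j ∈ 𝒞.image jdx, ENNReal.ofReal (bigC * r ^ j) :=
        Finset.sum_le_sum fun j _ => hfiber j
    _ ≤ ∑' j : ℕ, ENNReal.ofReal (bigC * r ^ j) := ENNReal.sum_le_tsum _
    _ = ENNReal.ofReal bigC * ∑' j : ℕ, (ENNReal.ofReal r) ^ j := by
        rw [← ENNReal.tsum_mul_left]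
        exact tsum_congr fun j => by
          rw [ENNReal.ofReal_mul hbigC0.le, ENNReal.ofReal_pow hr0.le]
    _ = ENNReal.ofReal bigC * (1 - ENNReal.ofReal r)⁻¹ := by rw [ENNReal.tsum_geometric]
    _ = ENNReal.ofReal bigC * ENNReal.ofReal (1 - r)⁻¹ := by
        rw [← ENNReal.ofReal_one, ← ENNReal.ofReal_sub _ hr0.le,
          ENNReal.ofReal_inv_of_pos (by linarith)]
    _ = ENNReal.ofReal ((C₀ * 6 ^ m / (1 - r)) * (s ^ (α/2) * E ^ (-α))) := by
        rw [← ENNReal.ofReal_mul hbigC0.le]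
        congr 1
        rw [hbigC]
        field_simp
    _ = ENNReal.ofReal ((C₀ * 6 ^ m / (1 - 2 ^ (-α))) * (s ^ (α/2) * (Q.l + s) ^ (-α))) := rfl

end GenBound

section KeyBound
variable {n : ℕ}

lemma key_bound (m α C₀ : ℝ) (hm : 0 < m) (hα : 0 < α) (hC₀ : 0 < C₀)
    (Q₀ Q : Cube n) (σ : Measure (Rn n))
    (hσ : ∀ lam : ℝ, 1 ≤ lam → σ (Q.dilatedSet lam) ≤ ENNReal.ofReal (C₀ * lam ^ m * Q.l ^ m)) :
    ∑' R : ↥(dyadicLattice Q₀), ENNReal.ofReal ((R : Cube n).l ^ (α/2)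
        / Cube.longDist Q (R : Cube n) ^ (m+α)) * σ (R : Cube n).set
      ≤ ENNReal.ofReal (((C₀ * 6 ^ m / (1 - 2 ^ (-α))) * (2 / (1 - 2 ^ (-(α/2)))))
          * Q.l ^ (-(α/2))) := by
  classical
  have hℓ : 0 < Q.l := Q.l_pos
  have hL : 0 < Q₀.l := Q₀.l_pos
  set C₂ : ℝ := C₀ * 6 ^ m / (1 - 2 ^ (-α)) with hC₂def
  have h2α : (0:ℝ) < 2 ^ (-α) := Real.rpow_pos_of_pos two_pos _
  have h2α1 : (2:ℝ) ^ (-α) < 1 := Real.rpow_lt_one_of_one_lt_of_neg one_lt_two (by linarith)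
  have h6m : (0:ℝ) < 6 ^ m := Real.rpow_pos_of_pos (by norm_num) _
  have hC₂ : 0 < C₂ := by
    rw [hC₂def]
    have : (0:ℝ) < 1 - 2 ^ (-α) := by linarith
    positivity
  set ρ : ℝ := 2 ^ (-(α/2)) with hρdef
  have hρ0 : 0 < ρ := Real.rpow_pos_of_pos two_pos _
  have hρ1 : ρ < 1 := Real.rpow_lt_one_of_one_lt_of_neg one_lt_two (by linarith)
  set A : ℝ := (Q₀.l / Q.l) ^ (α/2) with hAdef
  have hA : 0 < A := Real.rpow_pos_of_pos (by positivity) _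
  have hneg : ∀ x y : ℝ, 0 < x → x ≤ y → y ^ (-α) ≤ x ^ (-α) := by
    intro x y hx hxy
    rw [Real.rpow_neg hx.le, Real.rpow_neg (by linarith)]
    exact inv_anti₀ (Real.rpow_pos_of_pos hx _)
      (Real.rpow_le_rpow hx.le hxy hα.le)
  -- the pointwise bound for the generation scales
  have hterm : ∀ k : ℕ, (Q₀.l / 2 ^ k) ^ (α/2) * (Q.l + Q₀.l / 2 ^ k) ^ (-α)
      ≤ Q.l ^ (-(α/2)) * min (A * ρ ^ k) ((A * ρ ^ k)⁻¹) := by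
    intro k
    set s : ℝ := Q₀.l / 2 ^ k with hsdef
    have hs : 0 < s := by positivity
    have hid : (s / Q.l) ^ (α/2) = A * ρ ^ k := by
      have h1 : s / Q.l = (Q₀.l / Q.l) * ((2:ℝ) ^ k)⁻¹ := by
        rw [hsdef]; field_simp
      rw [h1, Real.mul_rpow (by positivity) (by positivity), hAdef]
      congr 1
      rw [← Real.rpow_natCast (2:ℝ) k, ← Real.rpow_neg two_pos.le,
        ← Real.rpow_mul (by norm_num), hρdef,
        ← Real.rpow_natCast ((2:ℝ) ^ (-(α/2))) k, ← Real.rpow_mul (by norm_num)]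
      congr 1
      ring
    have hdivrw : (s / Q.l) ^ (α/2) = s ^ (α/2) * Q.l ^ (-(α/2)) := by
      rw [Real.div_rpow hs.le hℓ.le, Real.rpow_neg hℓ.le, div_eq_mul_inv]
    have hinvrw : ((s / Q.l) ^ (α/2))⁻¹ = Q.l ^ (α/2) * s ^ (-(α/2)) := by
      rw [hdivrw, mul_inv, ← Real.rpow_neg_one (s ^ (α/2)), ← Real.rpow_neg_one (Q.l ^ (-(α/2))),
        ← Real.rpow_mul hs.le, ← Real.rpow_mul hℓ.le]
      ring_nf
    rw [mul_min_of_nonneg _ _ (Real.rpow_nonneg hℓ.le _)]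
    refine le_min ?_ ?_
    · -- s^{α/2} (ℓ+s)^{-α} ≤ ℓ^{-α/2} (s/ℓ)^{α/2}
      rw [← hid, hdivrw]
      have h2 : (Q.l + s) ^ (-α) ≤ Q.l ^ (-α) := hneg _ _ hℓ (by linarith)
      have h3 : Q.l ^ (-(α/2)) * (s ^ (α/2) * Q.l ^ (-(α/2)))
          = s ^ (α/2) * Q.l ^ (-α) := by
        rw [mul_comm, mul_assoc, ← Real.rpow_add hℓ]
        congr 2
        ring
      rw [h3]
      exact mul_le_mul_of_nonneg_left h2 (Real.rpow_nonneg hs.le _)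
    · -- s^{α/2} (ℓ+s)^{-α} ≤ ℓ^{-α/2} (ℓ/s)^{α/2} = s^{-α/2}
      rw [← hid, hinvrw]
      have h2 : (Q.l + s) ^ (-α) ≤ s ^ (-α) := hneg _ _ hs (by linarith)
      have h3 : Q.l ^ (-(α/2)) * (Q.l ^ (α/2) * s ^ (-(α/2)))
          = s ^ (-(α/2)) := by
        rw [← mul_assoc, ← Real.rpow_add hℓ]
        norm_num
      have h4 : s ^ (α/2) * s ^ (-α) = s ^ (-(α/2)) := by
        rw [← Real.rpow_add hs]
        congr 1
        ring
      rw [h3, ← h4]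
      exact mul_le_mul_of_nonneg_left h2 (Real.rpow_nonneg hs.le _)
  -- per-generation bound from `gen_bound`
  have hk : ∀ k : ℕ,
      (∑' j : Fin n → Fin (2 ^ k),
        ENNReal.ofReal ((latMap Q₀ ⟨k, j⟩).l ^ (α/2)
          / Cube.longDist Q (latMap Q₀ ⟨k, j⟩) ^ (m+α)) * σ (latMap Q₀ ⟨k, j⟩).set)
      ≤ ENNReal.ofReal (C₂ * ((Q₀.l / 2 ^ k) ^ (α/2) * (Q.l + Q₀.l / 2 ^ k) ^ (-α))) := by
    intro k
    rw [tsum_fintype]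
    have hdisj : ∀ j ∈ (Finset.univ : Finset (Fin n → Fin (2 ^ k))),
        ∀ j' ∈ (Finset.univ : Finset (Fin n → Fin (2 ^ k))), j ≠ j' →
        Disjoint (latMap Q₀ ⟨k, j⟩).set (latMap Q₀ ⟨k, j'⟩).set := by
      intro j _ j' _ hne
      exact gen_disjoint Q₀ k _ _
        (fun h => hne (funext fun i => Fin.ext (congrFun h i)))
    exact gen_bound m α C₀ hm hα hC₀ Q σ hσ Finset.univ
      (fun j => latMap Q₀ ⟨k, j⟩) (Q₀.l / 2 ^ k) (by positivity)
      (fun j _ => rfl) hdisj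
  calc ∑' R : ↥(dyadicLattice Q₀), ENNReal.ofReal ((R : Cube n).l ^ (α/2)
          / Cube.longDist Q (R : Cube n) ^ (m+α)) * σ (R : Cube n).set
      = ∑' k : ℕ, ∑' j : Fin n → Fin (2 ^ k),
          ENNReal.ofReal ((latMap Q₀ ⟨k, j⟩).l ^ (α/2)
            / Cube.longDist Q (latMap Q₀ ⟨k, j⟩) ^ (m+α)) * σ (latMap Q₀ ⟨k, j⟩).set :=
        tsum_lattice_eq Q₀ (fun R => ENNReal.ofReal (R.l ^ (α/2)
          / Cube.longDist Q R ^ (m+α)) * σ R.set)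
    _ ≤ ∑' k : ℕ, ENNReal.ofReal (C₂ * ((Q₀.l / 2 ^ k) ^ (α/2)
          * (Q.l + Q₀.l / 2 ^ k) ^ (-α))) := ENNReal.tsum_le_tsum hk
    _ ≤ ∑' k : ℕ, ENNReal.ofReal (C₂ * Q.l ^ (-(α/2)))
          * ENNReal.ofReal (min (A * ρ ^ k) ((A * ρ ^ k)⁻¹)) := by
        apply ENNReal.tsum_le_tsum
        intro k
        rw [← ENNReal.ofReal_mul (by positivity)]
        apply ENNReal.ofReal_le_ofReal
        rw [mul_assoc]
        exact mul_le_mul_of_nonneg_left (hterm k) hC₂.le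
    _ = ENNReal.ofReal (C₂ * Q.l ^ (-(α/2)))
          * ∑' k : ℕ, ENNReal.ofReal (min (A * ρ ^ k) ((A * ρ ^ k)⁻¹)) :=
        ENNReal.tsum_mul_left
    _ ≤ ENNReal.ofReal (C₂ * Q.l ^ (-(α/2))) * ENNReal.ofReal (2 / (1 - ρ)) :=
        mul_le_mul_right (tsum_min_geom hρ0 hρ1 hA) _
    _ = ENNReal.ofReal ((C₂ * (2 / (1 - ρ))) * Q.l ^ (-(α/2))) := by
        rw [← ENNReal.ofReal_mul (by positivity)]
        congr 1
        ring
    _ = ENNReal.ofReal (((C₀ * 6 ^ m / (1 - 2 ^ (-α))) * (2 / (1 - 2 ^ (-(α/2)))))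
          * Q.l ^ (-(α/2))) := rfl

end KeyBound

/-- Half power squared. -/
lemma half_mul_half (q : ℝ≥0∞) (hq : q ≠ ⊤) : q ^ (1/2:ℝ) * q ^ (1/2:ℝ) = q := by
  rcases eq_or_ne q 0 with h0 | h0
  · rw [h0, ENNReal.zero_rpow_of_pos (by norm_num), mul_zero]
  · rw [← ENNReal.rpow_add _ _ h0 hq]
    norm_num

lemma sq_half (q : ℝ≥0∞) (hq : q ≠ ⊤) : (q ^ (1/2:ℝ)) ^ 2 = q := by
  rw [sq, half_mul_half q hq]

/-- (Nazarov–Treil–Volberg Schur-type estimate.)  If `σ` is a finite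
Borel measure with `σ(λP) ≤ C₀ λ^m ℓ(P)^m` for all `λ ≥ 1` and all cubes `P` of the two
dyadic lattices `D, D'`, then for all nonnegative families `(x_P)`, `(y_R)`:
`Σ_{P,R} A_{PR} x_P y_R ≤ C (Σ x_P²)^{1/2} (Σ y_R²)^{1/2}`, and in particular
`(Σ_R [Σ_P A_{PR} x_P]²)^{1/2} ≤ C (Σ x_P²)^{1/2}`, with `C = C(n, m, α, C₀)`. -/
theorem statement12 (n : ℕ) (m α C₀ : ℝ) (hm : 0 < m) (hα : 0 < α) (hC₀ : 0 < C₀) :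
    ∃ C : ℝ, 0 < C ∧
      ∀ (R₀ R₀' : Cube n) (σ : Measure (Rn n)) [IsFiniteMeasure σ],
        (∀ P ∈ dyadicLattice R₀ ∪ dyadicLattice R₀', ∀ lam : ℝ, 1 ≤ lam →
          σ (Cube.dilatedSet P lam) ≤ ENNReal.ofReal (C₀ * lam ^ m * P.l ^ m)) →
      ∀ x y : Cube n → ℝ≥0∞,
        (∑' P : dyadicLattice R₀, ∑' R : dyadicLattice R₀',
            Amat σ m α (P : Cube n) (R : Cube n) * x (P : Cube n) * y (R : Cube n))
          ≤ ENNReal.ofReal C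
              * (∑' P : dyadicLattice R₀, x (P : Cube n) ^ 2) ^ (1/2 : ℝ)
              * (∑' R : dyadicLattice R₀', y (R : Cube n) ^ 2) ^ (1/2 : ℝ)
        ∧ (∑' R : dyadicLattice R₀',
              (∑' P : dyadicLattice R₀,
                  Amat σ m α (P : Cube n) (R : Cube n) * x (P : Cube n)) ^ 2)
                ^ (1/2 : ℝ)
            ≤ ENNReal.ofReal C
                * (∑' P : dyadicLattice R₀, x (P : Cube n) ^ 2) ^ (1/2 : ℝ) := by
  classical
  have h2α : (0:ℝ) < 2 ^ (-α) := Real.rpow_pos_of_pos two_pos _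
  have h2α1 : (2:ℝ) ^ (-α) < 1 := Real.rpow_lt_one_of_one_lt_of_neg one_lt_two (by linarith)
  have h2β : (0:ℝ) < 2 ^ (-(α/2)) := Real.rpow_pos_of_pos two_pos _
  have h2β1 : (2:ℝ) ^ (-(α/2)) < 1 := Real.rpow_lt_one_of_one_lt_of_neg one_lt_two (by linarith)
  have h6m : (0:ℝ) < 6 ^ m := Real.rpow_pos_of_pos (by norm_num) _
  set K : ℝ := (C₀ * 6 ^ m / (1 - 2 ^ (-α))) * (2 / (1 - 2 ^ (-(α/2)))) with hKdef
  have hKpos : 0 < K := by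
    rw [hKdef]
    have ha : (0:ℝ) < 1 - 2 ^ (-α) := by linarith
    have hb : (0:ℝ) < 1 - 2 ^ (-(α/2)) := by linarith
    positivity
  refine ⟨K, hKpos, ?_⟩
  intro R₀ R₀' σ _ hσ x y
  -- row bound
  have rowB : ∀ P : ↥(dyadicLattice R₀),
      (∑' R : ↥(dyadicLattice R₀'),
        ENNReal.ofReal ((P : Cube n).l ^ (α/2) * (R : Cube n).l ^ (α/2)
          / Cube.longDist (P : Cube n) (R : Cube n) ^ (m+α)) * σ (R : Cube n).set)
        ≤ ENNReal.ofReal K := by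
    intro P
    have hP : 0 < (P : Cube n).l := (P : Cube n).l_pos
    have hkey := key_bound m α C₀ hm hα hC₀ R₀' (P : Cube n) σ
      (fun lam hlam => hσ (P : Cube n) (Or.inl P.2) lam hlam)
    calc (∑' R : ↥(dyadicLattice R₀'),
          ENNReal.ofReal ((P : Cube n).l ^ (α/2) * (R : Cube n).l ^ (α/2)
            / Cube.longDist (P : Cube n) (R : Cube n) ^ (m+α)) * σ (R : Cube n).set)
        = ∑' R : ↥(dyadicLattice R₀'), ENNReal.ofReal ((P : Cube n).l ^ (α/2))
            * (ENNReal.ofReal ((R : Cube n).l ^ (α/2)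
              / Cube.longDist (P : Cube n) (R : Cube n) ^ (m+α)) * σ (R : Cube n).set) := by
          refine tsum_congr fun R => ?_
          rw [mul_div_assoc, ENNReal.ofReal_mul (Real.rpow_nonneg hP.le _), mul_assoc]
      _ = ENNReal.ofReal ((P : Cube n).l ^ (α/2))
            * ∑' R : ↥(dyadicLattice R₀'), ENNReal.ofReal ((R : Cube n).l ^ (α/2)
              / Cube.longDist (P : Cube n) (R : Cube n) ^ (m+α)) * σ (R : Cube n).set :=
          ENNReal.tsum_mul_left
      _ ≤ ENNReal.ofReal ((P : Cube n).l ^ (α/2))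
            * ENNReal.ofReal (K * (P : Cube n).l ^ (-(α/2))) := mul_le_mul_right hkey _
      _ = ENNReal.ofReal K := by
          rw [← ENNReal.ofReal_mul (Real.rpow_nonneg hP.le _)]
          congr 1
          rw [← mul_assoc, mul_comm ((P : Cube n).l ^ (α/2)) K, mul_assoc,
            ← Real.rpow_add hP]
          norm_num
  -- column bound
  have colB : ∀ R : ↥(dyadicLattice R₀'),
      (∑' P : ↥(dyadicLattice R₀),
        ENNReal.ofReal ((P : Cube n).l ^ (α/2) * (R : Cube n).l ^ (α/2)
          / Cube.longDist (P : Cube n) (R : Cube n) ^ (m+α)) * σ (P : Cube n).set)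
        ≤ ENNReal.ofReal K := by
    intro R
    have hR : 0 < (R : Cube n).l := (R : Cube n).l_pos
    have hkey := key_bound m α C₀ hm hα hC₀ R₀ (R : Cube n) σ
      (fun lam hlam => hσ (R : Cube n) (Or.inr R.2) lam hlam)
    calc (∑' P : ↥(dyadicLattice R₀),
          ENNReal.ofReal ((P : Cube n).l ^ (α/2) * (R : Cube n).l ^ (α/2)
            / Cube.longDist (P : Cube n) (R : Cube n) ^ (m+α)) * σ (P : Cube n).set)
        = ∑' P : ↥(dyadicLattice R₀), ENNReal.ofReal ((R : Cube n).l ^ (α/2))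
            * (ENNReal.ofReal ((P : Cube n).l ^ (α/2)
              / Cube.longDist (R : Cube n) (P : Cube n) ^ (m+α)) * σ (P : Cube n).set) := by
          refine tsum_congr fun P => ?_
          rw [Cube.longDist_comm, mul_comm ((P : Cube n).l ^ (α/2)) ((R : Cube n).l ^ (α/2)),
            mul_div_assoc, ENNReal.ofReal_mul (Real.rpow_nonneg hR.le _), mul_assoc]
      _ = ENNReal.ofReal ((R : Cube n).l ^ (α/2))
            * ∑' P : ↥(dyadicLattice R₀), ENNReal.ofReal ((P : Cube n).l ^ (α/2)
              / Cube.longDist (R : Cube n) (P : Cube n) ^ (m+α)) * σ (P : Cube n).set :=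
          ENNReal.tsum_mul_left
      _ ≤ ENNReal.ofReal ((R : Cube n).l ^ (α/2))
            * ENNReal.ofReal (K * (R : Cube n).l ^ (-(α/2))) := mul_le_mul_right hkey _
      _ = ENNReal.ofReal K := by
          rw [← ENNReal.ofReal_mul (Real.rpow_nonneg hR.le _)]
          congr 1
          rw [← mul_assoc, mul_comm ((R : Cube n).l ^ (α/2)) K, mul_assoc,
            ← Real.rpow_add hR]
          norm_num
  -- the kernel as a function
  set kern : Cube n → Cube n → ℝ≥0∞ := fun P R =>
    ENNReal.ofReal (P.l ^ (α / 2) * R.l ^ (α / 2) / Cube.longDist P R ^ (m + α)) with hkern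
  have hkfin : ∀ P R : Cube n, kern P R ≠ ⊤ := fun P R => ENNReal.ofReal_ne_top
  have hAmat : ∀ P R : Cube n, Amat σ m α P R
      = kern P R * (σ P.set) ^ (1/2:ℝ) * (σ R.set) ^ (1/2:ℝ) := fun P R => rfl
  -- part 1, for arbitrary second family
  have part1 : ∀ y' : Cube n → ℝ≥0∞,
      (∑' P : ↥(dyadicLattice R₀), ∑' R : ↥(dyadicLattice R₀'),
          Amat σ m α (P : Cube n) (R : Cube n) * x (P : Cube n) * y' (R : Cube n))
        ≤ ENNReal.ofReal K
            * (∑' P : ↥(dyadicLattice R₀), x (P : Cube n) ^ 2) ^ (1/2 : ℝ)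
            * (∑' R : ↥(dyadicLattice R₀'), y' (R : Cube n) ^ 2) ^ (1/2 : ℝ) := by
    intro y'
    set u : ↥(dyadicLattice R₀) × ↥(dyadicLattice R₀') → ℝ≥0∞ := fun z =>
      (kern (z.1 : Cube n) (z.2 : Cube n) * σ (z.2 : Cube n).set) ^ (1/2:ℝ) * x (z.1 : Cube n)
      with hu
    set v : ↥(dyadicLattice R₀) × ↥(dyadicLattice R₀') → ℝ≥0∞ := fun z =>
      (kern (z.1 : Cube n) (z.2 : Cube n) * σ (z.1 : Cube n).set) ^ (1/2:ℝ) * y' (z.2 : Cube n)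
      with hv
    have hpt : ∀ (P : ↥(dyadicLattice R₀)) (R : ↥(dyadicLattice R₀')),
        Amat σ m α (P : Cube n) (R : Cube n) * x (P : Cube n) * y' (R : Cube n)
          = u (P, R) * v (P, R) := by
      intro P R
      rw [hu, hv, hAmat]
      simp only
      rw [ENNReal.mul_rpow_of_nonneg _ _ (by norm_num : (0:ℝ) ≤ 1/2),
        ENNReal.mul_rpow_of_nonneg _ _ (by norm_num : (0:ℝ) ≤ 1/2)]
      calc kern (P : Cube n) (R : Cube n) * σ (P : Cube n).set ^ (1/2:ℝ)
            * σ (R : Cube n).set ^ (1/2:ℝ) * x (P : Cube n) * y' (R : Cube n)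
          = (kern (P : Cube n) (R : Cube n) ^ (1/2:ℝ) * kern (P : Cube n) (R : Cube n) ^ (1/2:ℝ))
            * (σ (P : Cube n).set ^ (1/2:ℝ) * σ (R : Cube n).set ^ (1/2:ℝ)
              * x (P : Cube n) * y' (R : Cube n)) := by
            rw [half_mul_half _ (hkfin _ _)]
            ring
        _ = kern (P : Cube n) (R : Cube n) ^ (1/2:ℝ) * σ (R : Cube n).set ^ (1/2:ℝ)
              * x (P : Cube n)
            * (kern (P : Cube n) (R : Cube n) ^ (1/2:ℝ) * σ (P : Cube n).set ^ (1/2:ℝ)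
              * y' (R : Cube n)) := by ring
    have hU : (∑' z : ↥(dyadicLattice R₀) × ↥(dyadicLattice R₀'), u z ^ 2)
        ≤ ENNReal.ofReal K * ∑' P : ↥(dyadicLattice R₀), x (P : Cube n) ^ 2 := by
      have hu2 : ∀ z, u z ^ 2 = kern (z.1 : Cube n) (z.2 : Cube n) * σ (z.2 : Cube n).set
          * x (z.1 : Cube n) ^ 2 := by
        intro z
        rw [hu]
        simp only
        rw [mul_pow, sq_half _ (ENNReal.mul_ne_top (hkfin _ _) (measure_ne_top σ _))]
      calc (∑' z : ↥(dyadicLattice R₀) × ↥(dyadicLattice R₀'), u z ^ 2)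
          = ∑' P : ↥(dyadicLattice R₀), ∑' R : ↥(dyadicLattice R₀'),
              kern (P : Cube n) (R : Cube n) * σ (R : Cube n).set * x (P : Cube n) ^ 2 := by
            rw [← ENNReal.tsum_prod (f := fun (P : ↥(dyadicLattice R₀)) (R : ↥(dyadicLattice R₀')) =>
              kern (P : Cube n) (R : Cube n) * σ (R : Cube n).set * x (P : Cube n) ^ 2)]
            exact tsum_congr fun z => hu2 z
        _ = ∑' P : ↥(dyadicLattice R₀), (∑' R : ↥(dyadicLattice R₀'),
              kern (P : Cube n) (R : Cube n) * σ (R : Cube n).set) * x (P : Cube n) ^ 2 := by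
            exact tsum_congr fun P => ENNReal.tsum_mul_right
        _ ≤ ∑' P : ↥(dyadicLattice R₀), ENNReal.ofReal K * x (P : Cube n) ^ 2 :=
            ENNReal.tsum_le_tsum fun P => mul_le_mul_left (rowB P) _
        _ = ENNReal.ofReal K * ∑' P : ↥(dyadicLattice R₀), x (P : Cube n) ^ 2 :=
            ENNReal.tsum_mul_left
    have hV : (∑' z : ↥(dyadicLattice R₀) × ↥(dyadicLattice R₀'), v z ^ 2)
        ≤ ENNReal.ofReal K * ∑' R : ↥(dyadicLattice R₀'), y' (R : Cube n) ^ 2 := by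
      have hv2 : ∀ z, v z ^ 2 = kern (z.1 : Cube n) (z.2 : Cube n) * σ (z.1 : Cube n).set
          * y' (z.2 : Cube n) ^ 2 := by
        intro z
        rw [hv]
        simp only
        rw [mul_pow, sq_half _ (ENNReal.mul_ne_top (hkfin _ _) (measure_ne_top σ _))]
      calc (∑' z : ↥(dyadicLattice R₀) × ↥(dyadicLattice R₀'), v z ^ 2)
          = ∑' P : ↥(dyadicLattice R₀), ∑' R : ↥(dyadicLattice R₀'),
              kern (P : Cube n) (R : Cube n) * σ (P : Cube n).set * y' (R : Cube n) ^ 2 := by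
            rw [← ENNReal.tsum_prod (f := fun (P : ↥(dyadicLattice R₀)) (R : ↥(dyadicLattice R₀')) =>
              kern (P : Cube n) (R : Cube n) * σ (P : Cube n).set * y' (R : Cube n) ^ 2)]
            exact tsum_congr fun z => hv2 z
        _ = ∑' R : ↥(dyadicLattice R₀'), ∑' P : ↥(dyadicLattice R₀),
              kern (P : Cube n) (R : Cube n) * σ (P : Cube n).set * y' (R : Cube n) ^ 2 :=
            ENNReal.tsum_comm
        _ = ∑' R : ↥(dyadicLattice R₀'), (∑' P : ↥(dyadicLattice R₀),
              kern (P : Cube n) (R : Cube n) * σ (P : Cube n).set) * y' (R : Cube n) ^ 2 := by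
            exact tsum_congr fun R => ENNReal.tsum_mul_right
        _ ≤ ∑' R : ↥(dyadicLattice R₀'), ENNReal.ofReal K * y' (R : Cube n) ^ 2 :=
            ENNReal.tsum_le_tsum fun R => mul_le_mul_left (colB R) _
        _ = ENNReal.ofReal K * ∑' R : ↥(dyadicLattice R₀'), y' (R : Cube n) ^ 2 :=
            ENNReal.tsum_mul_left
    calc (∑' P : ↥(dyadicLattice R₀), ∑' R : ↥(dyadicLattice R₀'),
            Amat σ m α (P : Cube n) (R : Cube n) * x (P : Cube n) * y' (R : Cube n))
        = ∑' z : ↥(dyadicLattice R₀) × ↥(dyadicLattice R₀'), u z * v z := by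
          have e1 : (∑' (P : ↥(dyadicLattice R₀)) (R : ↥(dyadicLattice R₀')),
              Amat σ m α (P : Cube n) (R : Cube n) * x (P : Cube n) * y' (R : Cube n))
              = ∑' (P : ↥(dyadicLattice R₀)) (R : ↥(dyadicLattice R₀')), u (P, R) * v (P, R) :=
            tsum_congr fun P => tsum_congr fun R => hpt P R
          have e2 : (∑' z : ↥(dyadicLattice R₀) × ↥(dyadicLattice R₀'), u z * v z)
              = ∑' (P : ↥(dyadicLattice R₀)) (R : ↥(dyadicLattice R₀')), u (P, R) * v (P, R) :=
            ENNReal.tsum_prod (f := fun (P : ↥(dyadicLattice R₀)) (R : ↥(dyadicLattice R₀')) =>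
              u (P, R) * v (P, R))
          exact e1.trans e2.symm
      _ ≤ (∑' z, u z ^ 2) ^ (1/2:ℝ) * (∑' z, v z ^ 2) ^ (1/2:ℝ) :=
          tsum_mul_le_sqrt_mul_sqrt u v
      _ ≤ (ENNReal.ofReal K * ∑' P : ↥(dyadicLattice R₀), x (P : Cube n) ^ 2) ^ (1/2:ℝ)
            * (ENNReal.ofReal K * ∑' R : ↥(dyadicLattice R₀'), y' (R : Cube n) ^ 2) ^ (1/2:ℝ) :=
          mul_le_mul' (ENNReal.rpow_le_rpow hU (by norm_num))
            (ENNReal.rpow_le_rpow hV (by norm_num))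
      _ = ENNReal.ofReal K
            * (∑' P : ↥(dyadicLattice R₀), x (P : Cube n) ^ 2) ^ (1/2 : ℝ)
            * (∑' R : ↥(dyadicLattice R₀'), y' (R : Cube n) ^ 2) ^ (1/2 : ℝ) := by
          rw [ENNReal.mul_rpow_of_nonneg _ _ (by norm_num : (0:ℝ) ≤ 1/2),
            ENNReal.mul_rpow_of_nonneg _ _ (by norm_num : (0:ℝ) ≤ 1/2),
            mul_mul_mul_comm, half_mul_half _ ENNReal.ofReal_ne_top, ← mul_assoc]
  refine ⟨part1 y, ?_⟩
  -- part 2 via duality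
  have h2 := dual_bound (fun (P : ↥(dyadicLattice R₀)) (R : ↥(dyadicLattice R₀')) =>
      Amat σ m α (P : Cube n) (R : Cube n)) (fun P => x (P : Cube n))
      (ENNReal.ofReal K * (∑' P : ↥(dyadicLattice R₀), x (P : Cube n) ^ 2) ^ (1/2 : ℝ))
      ?_
  · exact h2
  · intro z
    have := part1 (fun Rc => if h : Rc ∈ dyadicLattice R₀' then z ⟨Rc, h⟩ else 0)
    calc (∑' (P : ↥(dyadicLattice R₀)) (R : ↥(dyadicLattice R₀')),
            Amat σ m α (P : Cube n) (R : Cube n) * x (P : Cube n) * z R)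
        = ∑' (P : ↥(dyadicLattice R₀)) (R : ↥(dyadicLattice R₀')),
            Amat σ m α (P : Cube n) (R : Cube n) * x (P : Cube n)
              * (if h : (R : Cube n) ∈ dyadicLattice R₀' then z ⟨(R : Cube n), h⟩ else 0) := by
          refine tsum_congr fun P => tsum_congr fun R => ?_
          rw [dif_pos R.2]
      _ ≤ ENNReal.ofReal K
            * (∑' P : ↥(dyadicLattice R₀), x (P : Cube n) ^ 2) ^ (1/2 : ℝ)
            * (∑' R : ↥(dyadicLattice R₀'),
                (if h : (R : Cube n) ∈ dyadicLattice R₀' then z ⟨(R : Cube n), h⟩ else 0) ^ 2)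
                  ^ (1/2 : ℝ) := this
      _ = ENNReal.ofReal K
            * (∑' P : ↥(dyadicLattice R₀), x (P : Cube n) ^ 2) ^ (1/2 : ℝ)
            * (∑' R : ↥(dyadicLattice R₀'), z R ^ 2) ^ (1/2 : ℝ) := by
          congr 2
          exact tsum_congr fun R => by rw [dif_pos R.2]


end
end

section
/- Let m, α > 0 and γ = α/(2m + 2α). Let P, R be cubes in ℝ^n with ℓ(R) ≤ ℓ(P) and d(P,R) > ℓ(R)^γ ℓ(P)^{1−γ}. Then d(P,R)^{m+α} ≥ c D(P,R)^{m+α} (ℓ(R)/ℓ(P))^{α/2}, where D(P,R) = ℓ(P) + ℓ(R) + d(P,R) and c > 0 depends only on m and α. Equivalently, ℓ(R)^α / d(P,R)^{m+α} ≤ C ℓ(P)^{α/2} ℓ(R)^{α/2} / D(P,R)^{m+α}. -/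
open MeasureTheory Metric Set
open scoped ENNReal NNReal

noncomputable section

/-- With `γ = α/(2m+2α)`, if `ℓ(R) ≤ ℓ(P)` and
`d(P,R) > ℓ(R)^γ ℓ(P)^{1-γ}`, then
`d(P,R)^{m+α} ≥ c D(P,R)^{m+α} (ℓ(R)/ℓ(P))^{α/2}`, equivalently
`ℓ(R)^α / d(P,R)^{m+α} ≤ C ℓ(P)^{α/2} ℓ(R)^{α/2} / D(P,R)^{m+α}`,
with `c, C > 0` depending only on `m` and `α`. -/
theorem statement14 (m α : ℝ) (hm : 0 < m) (hα : 0 < α) :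
    ∃ c C : ℝ, 0 < c ∧ 0 < C ∧
      ∀ (n : ℕ) (P R : Cube n), R.l ≤ P.l →
        R.l ^ (α / (2 * m + 2 * α)) * P.l ^ (1 - α / (2 * m + 2 * α)) < Cube.dist P R →
        c * (Cube.longDist P R ^ (m + α) * (R.l / P.l) ^ (α / 2))
            ≤ Cube.dist P R ^ (m + α)
        ∧ R.l ^ α / Cube.dist P R ^ (m + α)
            ≤ C * (P.l ^ (α / 2) * R.l ^ (α / 2) / Cube.longDist P R ^ (m + α)) := by
  have hma : (0:ℝ) < m + α := by linarith
  refine ⟨((3:ℝ) ^ (m+α))⁻¹, (3:ℝ) ^ (m+α), by positivity, by positivity, ?_⟩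
  intro n P R hRP hd
  have hP := P.l_pos
  have hR := R.l_pos
  set γ := α / (2 * m + 2 * α) with hγ
  have hdpos : 0 < Cube.dist P R := lt_trans (by positivity) hd
  set d := Cube.dist P R with hdd
  have hDdef : Cube.longDist P R = P.l + R.l + d := rfl
  set D := P.l + R.l + d with hD
  have hDpos : 0 < D := by positivity
  have hγma : γ * (m + α) = α / 2 := by
    rw [hγ]; field_simp
  have key : D ^ (m+α) * R.l ^ (α/2) ≤ 3 ^ (m+α) * (d ^ (m+α) * P.l ^ (α/2)) := by
    rcases le_or_gt P.l d with hc | hc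
    · have h1 : D ^ (m+α) ≤ (3*d) ^ (m+α) := by
        apply Real.rpow_le_rpow hDpos.le _ hma.le
        nlinarith
      have h2 : R.l ^ (α/2) ≤ P.l ^ (α/2) :=
        Real.rpow_le_rpow hR.le hRP (by positivity)
      have h3 : (3*d)^(m+α) = 3^(m+α) * d^(m+α) := Real.mul_rpow (by norm_num) hdpos.le
      calc D^(m+α)*R.l^(α/2) ≤ (3*d)^(m+α) * P.l^(α/2) :=
            mul_le_mul h1 h2 (by positivity) (by positivity)
        _ = 3^(m+α) * (d^(m+α) * P.l^(α/2)) := by rw [h3]; ring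
    · have h1 : D ^ (m+α) ≤ (3*P.l) ^ (m+α) := by
        apply Real.rpow_le_rpow hDpos.le _ hma.le
        nlinarith
      have h3 : (3*P.l)^(m+α) = 3^(m+α) * P.l^(m+α) := Real.mul_rpow (by norm_num) hP.le
      have h4 : R.l ^ (α/2) * P.l ^ ((m+α) - α/2) ≤ d^(m+α) := by
        have hmono := Real.rpow_le_rpow (by positivity) hd.le hma.le
        calc R.l ^ (α/2) * P.l ^ ((m+α) - α/2)
            = (R.l ^ γ * P.l ^ (1-γ)) ^ (m+α) := by
              rw [Real.mul_rpow (by positivity) (by positivity),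
                ← Real.rpow_mul hR.le, ← Real.rpow_mul hP.le, hγma,
                show (1-γ)*(m+α) = m+α-α/2 by linear_combination -hγma]
          _ ≤ d ^ (m+α) := hmono
      have h5 : P.l ^ (m+α) = P.l ^ ((m+α)-α/2) * P.l ^ (α/2) := by
        rw [← Real.rpow_add hP]; ring_nf
      calc D^(m+α)*R.l^(α/2) ≤ (3*P.l)^(m+α) * R.l^(α/2) :=
            mul_le_mul_of_nonneg_right h1 (by positivity)
        _ = 3^(m+α) * ((R.l^(α/2) * P.l^((m+α)-α/2)) * P.l^(α/2)) := by
            rw [h3, h5]; ring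
        _ ≤ 3^(m+α) * (d^(m+α) * P.l^(α/2)) := by
            gcongr
  constructor
  · have g1 : ((3:ℝ)^(m+α))⁻¹ * (D^(m+α) * (R.l/P.l)^(α/2))
        = (D^(m+α) * R.l^(α/2)) / ((3:ℝ)^(m+α) * P.l^(α/2)) := by
      rw [Real.div_rpow hR.le hP.le]
      field_simp
    rw [hDdef, g1, div_le_iff₀ (by positivity)]
    calc D^(m+α)*R.l^(α/2) ≤ 3^(m+α)*(d^(m+α)*P.l^(α/2)) := key
      _ = d^(m+α) * (3^(m+α)*P.l^(α/2)) := by ring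
  · have hRsplit : R.l^α = R.l^(α/2) * R.l^(α/2) := by
      rw [← Real.rpow_add hR]; ring_nf
    rw [mul_div_assoc', div_le_div_iff₀ (by positivity) (by positivity)]
    have := mul_le_mul_of_nonneg_left key (Real.rpow_nonneg hR.le (α/2))
    calc R.l^α * D^(m+α) = R.l^(α/2) * (D^(m+α) * R.l^(α/2)) := by rw [hRsplit]; ring
      _ ≤ R.l^(α/2) * (3^(m+α) * (d^(m+α) * P.l^(α/2))) := this
      _ = 3^(m+α) * (P.l^(α/2) * R.l^(α/2)) * d^(m+α) := by ring

end
end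

section
/- Let (s_t)_{t>0} be kernels satisfying the size condition with exponents m, α > 0. Let σ be a Borel measure on ℝ^n, x ∈ ℝ^n and d > 0, and suppose σ(B(x,ρ)) ≤ C₀ ρ^m for every ρ ≥ d/2. Let g be a Borel function with |g| ≤ 1 σ-a.e. and g = 0 on B(x, d/2). Then for every 0 < t ≤ d: |θ_t^σ g(x)| ≤ C (t/d)^α, where C depends only on C₀, m, α and the kernel size constant. -/
open MeasureTheory Metric Set
open scoped ENNReal NNReal

noncomputable section

/-- If the kernels satisfy the size condition,
`σ(B(x,ρ)) ≤ C₀ ρ^m` for every `ρ ≥ d/2`, `|g| ≤ 1` σ-a.e. and `g` vanishes on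
`B(x, d/2)`, then `|θ_t^σ g(x)| ≤ C (t/d)^α` for `0 < t ≤ d`, where `C` depends
only on `C₀`, `m`, `α` and the kernel size constant. -/
theorem statement16 (m α Cs C₀ : ℝ) (hm : 0 < m) (hα : 0 < α) (hCs : 0 < Cs)
    (hC₀ : 0 < C₀) :
    ∃ C : ℝ, 0 < C ∧
      ∀ (n : ℕ) (sk : ℝ → Rn n → Rn n → ℂ),
        Measurable (fun p : ℝ × Rn n × Rn n => sk p.1 p.2.1 p.2.2) →
        SizeCond n m α Cs sk →
      ∀ (σ : Measure (Rn n)) (x : Rn n) (d : ℝ), 0 < d →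
        (∀ ρ : ℝ, d / 2 ≤ ρ → σ (Metric.ball x ρ) ≤ ENNReal.ofReal (C₀ * ρ ^ m)) →
      ∀ g : Rn n → ℂ, Measurable g → (∀ᵐ y ∂σ, ‖g y‖ ≤ 1) →
        (∀ y ∈ Metric.ball x (d / 2), g y = 0) →
      ∀ t : ℝ, 0 < t → t ≤ d →
        ‖theta sk σ g t x‖ ≤ C * (t / d) ^ α := by
  have h2α : (1:ℝ) < (2:ℝ) ^ α :=
    (Real.one_lt_rpow_iff_of_pos (by norm_num)).mpr (Or.inl ⟨by norm_num, hα⟩)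
  set q : ℝ := ((2:ℝ) ^ α)⁻¹ with hq_def
  have hq0 : 0 ≤ q := by positivity
  have hq1 : q < 1 := by
    rw [hq_def, inv_lt_one_iff₀]; right; exact h2α
  have h1q : 0 < 1 - q := by linarith
  refine ⟨Cs * C₀ * (2:ℝ) ^ m * (2:ℝ) ^ α * (1 - q)⁻¹, by positivity, ?_⟩
  set C : ℝ := Cs * C₀ * (2:ℝ) ^ m * (2:ℝ) ^ α * (1 - q)⁻¹ with hC_def
  intro n sk hskm hsize σ x d hd hσ g hgm hg1 hg0 t ht htd
  have hd2 : (0:ℝ) < d / 2 := by linarith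
  set r : ℕ → ℝ := fun j => 2 ^ j * (d / 2) with hr_def
  have hr : ∀ j, 0 < r j := fun j => by positivity
  have hrle : ∀ j, d / 2 ≤ r j := by
    intro j
    have : (1:ℝ) ≤ 2 ^ j := one_le_pow₀ (by norm_num : (1:ℝ) ≤ 2)
    calc d / 2 = 1 * (d / 2) := (one_mul _).symm
    _ ≤ 2 ^ j * (d / 2) := by gcongr
  set A : ℕ → Set (Rn n) := fun j => ball x (r (j + 1)) \ ball x (r j) with hA_def
  set h : Rn n → ℝ≥0∞ :=
    fun y => ENNReal.ofReal (Cs * t ^ α / (t + dist x y) ^ (m + α)) with hh_def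
  set K : ℝ := Cs * C₀ * (2:ℝ) ^ m * t ^ α / (d / 2) ^ α with hK_def
  have hK : 0 ≤ K := by positivity
  -- covering
  have hcover : (ball x (d / 2))ᶜ ⊆ ⋃ j, A j := by
    intro y hy
    simp only [mem_compl_iff, mem_ball, not_lt] at hy
    have hP : ∃ k, dist y x < 2 ^ k * (d / 2) := by
      obtain ⟨N, hN⟩ := pow_unbounded_of_one_lt (dist y x / (d / 2)) (by norm_num : (1:ℝ) < 2)
      exact ⟨N, by rwa [div_lt_iff₀ hd2] at hN⟩
    have hk0 : Nat.find hP ≠ 0 := by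
      intro h0
      have := Nat.find_spec hP
      rw [h0] at this
      simp only [pow_zero, one_mul] at this
      linarith
    obtain ⟨j, hj⟩ := Nat.exists_eq_succ_of_ne_zero hk0
    refine mem_iUnion.2 ⟨j, ?_, ?_⟩
    · have := Nat.find_spec hP
      rw [hj] at this
      exact mem_ball.2 this
    · intro hmem
      exact Nat.find_min hP (by omega : j < Nat.find hP) (mem_ball.1 hmem)
  -- per-annulus bound
  have hAj : ∀ j, ∫⁻ y in A j, h y ∂σ ≤
      ENNReal.ofReal (Cs * t ^ α / (r j) ^ (m + α) * (C₀ * (r (j + 1)) ^ m)) := by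
    intro j
    have hmeas : MeasurableSet (A j) := measurableSet_ball.diff measurableSet_ball
    calc ∫⁻ y in A j, h y ∂σ
        ≤ ∫⁻ _ in A j, ENNReal.ofReal (Cs * t ^ α / (r j) ^ (m + α)) ∂σ := by
          refine setLIntegral_mono' hmeas fun y hy => ?_
          refine ENNReal.ofReal_le_ofReal ?_
          have hyd : r j ≤ dist x y := by
            rw [dist_comm]
            exact not_lt.1 fun hlt => hy.2 (mem_ball.2 hlt)
          have hle : r j ≤ t + dist x y := by linarith
          gcongr
    _ = ENNReal.ofReal (Cs * t ^ α / (r j) ^ (m + α)) * σ (A j) := setLIntegral_const _ _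
    _ ≤ ENNReal.ofReal (Cs * t ^ α / (r j) ^ (m + α)) * ENNReal.ofReal (C₀ * (r (j + 1)) ^ m) := by
          gcongr
          calc σ (A j) ≤ σ (ball x (r (j + 1))) := measure_mono diff_subset
          _ ≤ _ := hσ _ (hrle (j + 1))
    _ = ENNReal.ofReal (Cs * t ^ α / (r j) ^ (m + α) * (C₀ * (r (j + 1)) ^ m)) := by
          rw [← ENNReal.ofReal_mul (by positivity)]
  -- geometric identity
  have haj : ∀ j : ℕ, Cs * t ^ α / (r j) ^ (m + α) * (C₀ * (r (j + 1)) ^ m) = K * q ^ j := by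
    intro j
    have hb : (0:ℝ) < 2 ^ j := by positivity
    have e1 : (r j) ^ (m + α) = ((2:ℝ) ^ j) ^ m * ((2:ℝ) ^ j) ^ α * ((d / 2) ^ m * (d / 2) ^ α) := by
      show ((2:ℝ) ^ j * (d / 2)) ^ (m + α) = _
      rw [Real.mul_rpow hb.le hd2.le, Real.rpow_add hb, Real.rpow_add hd2]
    have e2 : (r (j + 1)) ^ m = (2:ℝ) ^ m * (((2:ℝ) ^ j) ^ m * (d / 2) ^ m) := by
      have hre : r (j + 1) = 2 * ((2:ℝ) ^ j * (d / 2)) := by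
        show (2:ℝ) ^ (j + 1) * (d / 2) = _
        rw [pow_succ]; ring
      rw [hre, Real.mul_rpow (by positivity) (by positivity), Real.mul_rpow hb.le hd2.le]
    have e3 : q ^ j = (((2:ℝ) ^ j) ^ α)⁻¹ := by
      rw [hq_def, inv_pow]
      congr 1
      rw [← Real.rpow_natCast ((2:ℝ) ^ α) j, ← Real.rpow_natCast (2:ℝ) j,
        ← Real.rpow_mul (by norm_num), ← Real.rpow_mul (by norm_num), mul_comm]
    rw [e1, e2, e3, hK_def]
    have h1 : ((2:ℝ) ^ j) ^ m ≠ 0 := by positivity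
    have h2 : ((2:ℝ) ^ j) ^ α ≠ 0 := by positivity
    have h3 : ((d:ℝ) / 2) ^ m ≠ 0 := by positivity
    have h4 : ((d:ℝ) / 2) ^ α ≠ 0 := by positivity
    field_simp
  have hsummable : Summable fun j : ℕ => K * q ^ j :=
    (summable_geometric_of_lt_one hq0 hq1).mul_left K
  -- sum of the series
  have htsum : (∑' j : ℕ, K * q ^ j) = C * (t / d) ^ α := by
    rw [tsum_mul_left, tsum_geometric_of_lt_one hq0 hq1, hK_def, hC_def]
    have e4 : ((d:ℝ) / 2) ^ α = d ^ α / (2:ℝ) ^ α := Real.div_rpow hd.le (by norm_num : (0:ℝ) ≤ 2) α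
    have e5 : ((t:ℝ) / d) ^ α = t ^ α / d ^ α := Real.div_rpow ht.le hd.le α
    rw [e4, e5]
    have h5 : (d:ℝ) ^ α ≠ 0 := by positivity
    have h6 : ((2:ℝ)) ^ α ≠ 0 := by positivity
    have h7 : (1 - q) ≠ 0 := ne_of_gt h1q
    field_simp
  -- pointwise bound
  have hpt : ∀ᵐ y ∂σ, ENNReal.ofReal ‖sk t x y * g y‖ ≤ (ball x (d / 2))ᶜ.indicator h y := by
    filter_upwards [hg1] with y hy1
    by_cases hyB : y ∈ ball x (d / 2)
    · have : y ∉ (ball x (d / 2))ᶜ := by simpa using hyB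
      rw [indicator_of_notMem this, hg0 y hyB, mul_zero]
      simp
    · rw [indicator_of_mem (mem_compl hyB)]
      refine ENNReal.ofReal_le_ofReal ?_
      calc ‖sk t x y * g y‖ = ‖sk t x y‖ * ‖g y‖ := norm_mul _ _
      _ ≤ Cs * t ^ α / (t + dist x y) ^ (m + α) * 1 :=
          mul_le_mul (hsize t ht x y) hy1 (norm_nonneg _) (by positivity)
      _ = Cs * t ^ α / (t + dist x y) ^ (m + α) := mul_one _
  -- main estimate
  have key : ∫⁻ y, ENNReal.ofReal ‖sk t x y * g y‖ ∂σ ≤ ENNReal.ofReal (C * (t / d) ^ α) := by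
    calc ∫⁻ y, ENNReal.ofReal ‖sk t x y * g y‖ ∂σ
        ≤ ∫⁻ y, (ball x (d / 2))ᶜ.indicator h y ∂σ := lintegral_mono_ae hpt
    _ = ∫⁻ y in (ball x (d / 2))ᶜ, h y ∂σ := lintegral_indicator measurableSet_ball.compl _
    _ ≤ ∫⁻ y in ⋃ j, A j, h y ∂σ := lintegral_mono_set hcover
    _ ≤ ∑' j, ∫⁻ y in A j, h y ∂σ := lintegral_iUnion_le _ _
    _ ≤ ∑' j : ℕ, ENNReal.ofReal (K * q ^ j) :=
          ENNReal.tsum_le_tsum fun j => (haj j) ▸ (hAj j)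
    _ = ENNReal.ofReal (∑' j : ℕ, K * q ^ j) :=
          (ENNReal.ofReal_tsum_of_nonneg (fun j => by positivity) hsummable).symm
    _ = ENNReal.ofReal (C * (t / d) ^ α) := by rw [htsum]
  calc ‖theta sk σ g t x‖
      ≤ (∫⁻ y, ENNReal.ofReal ‖sk t x y * g y‖ ∂σ).toReal :=
        norm_integral_le_lintegral_norm _
  _ ≤ C * (t / d) ^ α := ENNReal.toReal_le_of_le_ofReal (by positivity) key

end
end
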